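/- arXiv:2601.13321 — 6 statements merged into one kernel-verified Lean document; each statement's English description precedes it below -/
import Mathlib

section
/- Let κ and λ be infinite cardinals with κ regular and κ ≤ λ, and set λ' = λ^{<κ}. Then (λ')^{<κ} = λ', and the space ᵏλ with the bounded topology is homeomorphic to the space ᵏλ' with the bounded topology. -/
open Cardinal Set

noncomputable section

/-- The type of `ι`-indexed sequences in `A`, as a type synonym carrying the bounded topology. -/
def GSeq (ι A : Type) : Type := ι → A

/-- The bounded topology on `GSeq ι A`: the topology generated by the cones
`N_s = {y | ∀ i < b, y i = x i}`. -/
instance GSeq.topologicalSpace (ι A : Type) [LinearOrder ι] : TopologicalSpace (GSeq ι A) :=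
  TopologicalSpace.generateFrom
    {C : Set (GSeq ι A) | ∃ (x : ι → A) (b : ι), C = {y : GSeq ι A | ∀ i, i < b → y i = x i}}

namespace S13

section Topo
variable {ι A B : Type} [LinearOrder ι]

lemma cone_isOpen (x : ι → A) (b : ι) :
    IsOpen ({y : GSeq ι A | ∀ i, i < b → y i = x i}) :=
  TopologicalSpace.isOpen_generateFrom_of_mem ⟨x, b, rfl⟩

lemma cont_aux (f : (ι → A) → (ι → B))
    (h : ∀ (x : ι → A) (b : ι), ∃ b' : ι, ∀ x' : ι → A,
      (∀ i, i < b' → x' i = x i) → ∀ i, i < b → f x' i = f x i) :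
    Continuous (X := GSeq ι A) (Y := GSeq ι B) f := by
  apply continuous_generateFrom_iff.mpr
  rintro S ⟨z, b, rfl⟩
  have : f ⁻¹' {y : GSeq ι B | ∀ i, i < b → y i = z i} =
      ⋃ x : {x : ι → A // ∀ i, i < b → f x i = z i},
        {x' : GSeq ι A | ∀ i, i < Classical.choose (h x.1 b) → x' i = x.1 i} := by
    ext x'
    constructor
    · intro hx'
      exact mem_iUnion.2 ⟨⟨x', hx'⟩, fun i _ => rfl⟩
    · rintro hx'
      obtain ⟨x, hx⟩ := mem_iUnion.1 hx'
      intro i hi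
      rw [Classical.choose_spec (h x.1 b) x' hx i hi, x.2 i hi]
  erw [this]
  exact isOpen_iUnion fun x => cone_isOpen _ _

lemma homeo_aux (F : (ι → A) ≃ (ι → B))
    (h1 : ∀ (x : ι → A) (b : ι), ∃ b' : ι, ∀ x' : ι → A,
      (∀ i, i < b' → x' i = x i) → ∀ i, i < b → F x' i = F x i)
    (h2 : ∀ (y : ι → B) (b : ι), ∃ b' : ι, ∀ y' : ι → B,
      (∀ i, i < b' → y' i = y i) → ∀ i, i < b → F.symm y' i = F.symm y i) :
    Nonempty (GSeq ι A ≃ₜ GSeq ι B) :=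
  ⟨{ toEquiv := F
     continuous_toFun := cont_aux F h1
     continuous_invFun := cont_aux F.symm h2 }⟩

end Topo
end S13

namespace S13
set_option linter.unusedSectionVars false
open Ordinal

variable (κ : Cardinal.{0})

/-- the ordinal position of `t` in `κ.ord.ToType`. -/
def tyi (t : κ.ord.ToType) : Ordinal := (((Ordinal.ToType.mk (o := κ.ord))).symm t).1

lemma tyi_lt (t : κ.ord.ToType) : tyi κ t < κ.ord := (((Ordinal.ToType.mk (o := κ.ord))).symm t).2

lemma tyi_lt_tyi {s t : κ.ord.ToType} : tyi κ s < tyi κ t ↔ s < t := by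
  rw [tyi, tyi, Subtype.coe_lt_coe, OrderIso.lt_iff_lt]

lemma tyi_le_tyi {s t : κ.ord.ToType} : tyi κ s ≤ tyi κ t ↔ s ≤ t := by
  rw [tyi, tyi, Subtype.coe_le_coe, OrderIso.le_iff_le]

lemma tyi_inj {s t : κ.ord.ToType} (h : tyi κ s = tyi κ t) : s = t := by
  apply le_antisymm <;> rw [← tyi_le_tyi (κ := κ), h]

/-- inverse of `tyi`. -/
def posT [Nonempty κ.ord.ToType] (v : Ordinal) : κ.ord.ToType :=
  if h : v < κ.ord then (Ordinal.ToType.mk (o := κ.ord)) ⟨v, h⟩ else Classical.arbitrary _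

variable [Nonempty κ.ord.ToType]

lemma tyi_posT {v : Ordinal} (h : v < κ.ord) : tyi κ (posT κ v) = v := by
  rw [posT, dif_pos h, tyi]
  rw [OrderIso.symm_apply_apply]

lemma posT_tyi (t : κ.ord.ToType) : posT κ (tyi κ t) = t := by
  rw [posT, dif_pos (tyi_lt κ t)]
  have : (⟨tyi κ t, tyi_lt κ t⟩ : Set.Iio κ.ord) = ((Ordinal.ToType.mk (o := κ.ord))).symm t :=
    Subtype.ext rfl
  rw [this, OrderIso.apply_symm_apply]

lemma posT_lt_posT {v w : Ordinal} (hv : v < κ.ord) (hw : w < κ.ord) :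
    posT κ v < posT κ w ↔ v < w := by
  rw [← tyi_lt_tyi (κ := κ), tyi_posT κ hv, tyi_posT κ hw]


/-! ### the block-start recursion -/

variable {κ}

/-- `bstep g i` : transfinite iteration of "block lengths" `g`:
`bstep g i = sup_{j < i} g j (bstep g j)`. -/
def bstep (g : κ.ord.ToType → Ordinal → Ordinal) : κ.ord.ToType → Ordinal :=
  WellFoundedLT.fix fun i rec => ⨆ j : Set.Iio i, g j.1 (rec j.1 j.2)

lemma bstep_def (g : κ.ord.ToType → Ordinal → Ordinal) (i : κ.ord.ToType) :
    bstep g i = ⨆ j : Set.Iio i, g j.1 (bstep g j.1) := by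
  rw [bstep, WellFoundedLT.fix_eq]

lemma le_bstep (g : κ.ord.ToType → Ordinal → Ordinal) {j i : κ.ord.ToType} (h : j < i) :
    g j (bstep g j) ≤ bstep g i := by
  conv_rhs => rw [bstep_def]
  exact le_ciSup (f := fun j : Set.Iio i => g j.1 (bstep g j.1))
    (Ordinal.bddAbove_range _) ⟨j, h⟩

section g
variable {g : κ.ord.ToType → Ordinal → Ordinal} (hg : ∀ j v, v < g j v)

include hg

lemma bstep_lt_bstep {j i : κ.ord.ToType} (h : j < i) : bstep g j < bstep g i :=
  (hg j _).trans_le (le_bstep g h)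

lemma bstep_mono {j i : κ.ord.ToType} (h : j ≤ i) : bstep g j ≤ bstep g i := by
  rcases eq_or_lt_of_le h with rfl | h
  · rfl
  · exact (bstep_lt_bstep hg h).le

omit hg in
lemma mk_Iio_lt (i : κ.ord.ToType) : #(Set.Iio i) < κ :=
  Cardinal.mk_Iio_ord_toType i

lemma bstep_lt_ord (hκ : κ.IsRegular)
    (hg' : ∀ j v, v < κ.ord → g j v < κ.ord) (i : κ.ord.ToType) : bstep g i < κ.ord := by
  induction i using WellFoundedLT.induction with
  | ind i IH =>
    rw [bstep_def]
    apply iSup_lt_ord_of_isRegular hκ ((mk_Iio_lt i))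
    rintro ⟨j, hj⟩
    exact hg' j _ (IH j hj)

variable [Nonempty κ.ord.ToType]

lemma tyi_le_bstep (i : κ.ord.ToType) : tyi κ i ≤ bstep g i := by
  induction i using WellFoundedLT.induction with
  | ind i IH =>
    apply le_of_forall_lt
    intro ξ hξ
    have hξ' : ξ < κ.ord := hξ.trans (tyi_lt κ i)
    have hj : posT κ ξ < i := by
      rw [← tyi_lt_tyi (κ := κ), tyi_posT κ hξ']
      exact hξ
    calc ξ = tyi κ (posT κ ξ) := (tyi_posT κ hξ').symm
    _ ≤ bstep g (posT κ ξ) := IH _ hj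
    _ < g (posT κ ξ) (bstep g (posT κ ξ)) := hg _ _
    _ ≤ bstep g i := le_bstep g hj

open scoped Classical in
/-- the index of the block containing a given position. -/
def blk (g : κ.ord.ToType → Ordinal → Ordinal) (ξ : Ordinal) : κ.ord.ToType :=
  if h : {i | ξ < g i (bstep g i)}.Nonempty then
    (wellFounded_lt (α := κ.ord.ToType)).min _ h
  else Classical.arbitrary _

lemma blk_spec {ξ : Ordinal} (hξ : ξ < κ.ord) :
    bstep g (blk g ξ) ≤ ξ ∧ ξ < g (blk g ξ) (bstep g (blk g ξ)) := by
  have hne : {i | ξ < g i (bstep g i)}.Nonempty := by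
    refine ⟨posT κ ξ, ?_⟩
    have : ξ ≤ bstep g (posT κ ξ) := by
      conv_lhs => rw [← tyi_posT κ hξ]
      exact tyi_le_bstep hg _
    exact this.trans_lt (hg _ _)
  have hmin := (wellFounded_lt (α := κ.ord.ToType)).min_mem _ hne
  rw [blk, dif_pos hne]
  refine ⟨?_, hmin⟩
  rw [bstep_def]
  apply ciSup_le'
  rintro ⟨j, hj⟩
  by_contra hc
  exact (wellFounded_lt (α := κ.ord.ToType)).not_lt_min {i | ξ < g i (bstep g i)} (x := j) (not_le.1 hc) hj

lemma blk_eq {ξ : Ordinal} (hξ : ξ < κ.ord) {i : κ.ord.ToType}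
    (h1 : bstep g i ≤ ξ) (h2 : ξ < g i (bstep g i)) : blk g ξ = i := by
  rcases lt_trichotomy (blk g ξ) i with h | h | h
  · have := (le_bstep g h).trans h1
    exact absurd ((blk_spec hg hξ).2.trans_le this) (lt_irrefl ξ)
  · exact h
  · have := (le_bstep g h).trans (blk_spec hg hξ).1
    exact absurd (h2.trans_le this) (lt_irrefl ξ)

omit hg in
lemma tyi_succ_lt (hκ : κ.IsRegular) (b : κ.ord.ToType) : tyi κ b + 1 < κ.ord := by
  rw [Ordinal.add_one_eq_succ]
  exact (Cardinal.isSuccLimit_ord hκ.aleph0_le).succ_lt (tyi_lt κ b)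

end g

section succ
variable [Nonempty κ.ord.ToType] (hκ : κ.IsRegular)

/-- successor in `κ.ord.ToType`. -/
def succT (b : κ.ord.ToType) : κ.ord.ToType := posT κ (tyi κ b + 1)

include hκ

lemma lt_succT_iff {j b : κ.ord.ToType} : j < succT b ↔ j ≤ b := by
  rw [succT, ← tyi_lt_tyi (κ := κ), tyi_posT κ (tyi_succ_lt hκ b), Ordinal.add_one_eq_succ,
    Order.lt_succ_iff, tyi_le_tyi]

lemma lt_succT (b : κ.ord.ToType) : b < succT b := (lt_succT_iff hκ).2 le_rfl

lemma succT_le_of_lt {i b : κ.ord.ToType} (h : i < b) : succT i ≤ b := by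
  by_contra hc
  exact absurd ((lt_succT_iff hκ).1 (not_le.1 hc)) (not_le.2 h)

variable {g : κ.ord.ToType → Ordinal → Ordinal} (hg : ∀ j v, v < g j v)
include hg

lemma bstep_succT (b : κ.ord.ToType) : bstep g (succT b) = g b (bstep g b) := by
  apply le_antisymm
  · rw [bstep_def]
    apply ciSup_le'
    rintro ⟨j, hj⟩
    rcases lt_or_eq_of_le ((lt_succT_iff hκ).1 hj) with h | h
    · exact (le_bstep g h).trans (hg b _).le
    · subst h; rfl
  · exact le_bstep g (lt_succT hκ b)

/-- congruence for `bstep`. -/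
lemma bstep_congr {g' : κ.ord.ToType → Ordinal → Ordinal} (b : κ.ord.ToType)
    (h : ∀ j v, j < b → v < bstep g b → g j v = g' j v) :
    ∀ i, i ≤ b → bstep g i = bstep g' i := by
  intro i
  induction i using WellFoundedLT.induction with
  | ind i IH =>
    intro hib
    rw [bstep_def, bstep_def]
    apply iSup_congr
    rintro ⟨j, hj⟩
    have hjb : j < b := hj.trans_le hib
    rw [← IH j hj hjb.le, ← h j _ hjb (bstep_lt_bstep hg hjb)]

end succ

/-! ### encode/decode between `κ → A` and `κ → B` where `B ≃ Σ a : A, (len a → A)` -/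

section main

variable (hκ : κ.IsRegular) {A B : Type} (len : A → Ordinal)
  (e : B ≃ Σ a : A, ((len a).ToType → A)) [Nonempty κ.ord.ToType]

lemma lt_add_one_add (v l : Ordinal) : v < v + 1 + l := by
  have : (0 : Ordinal) < 1 + l := lt_of_lt_of_le zero_lt_one le_self_add
  calc v = v + 0 := (add_zero v).symm
  _ < v + (1 + l) := by exact (add_lt_add_iff_left v).2 this
  _ = v + 1 + l := by rw [add_assoc]

lemma add_one_add_lt (hκ : κ.IsRegular) {v l : Ordinal} (hv : v < κ.ord) (hl : l < κ.ord) :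
    v + 1 + l < κ.ord := by
  rw [Cardinal.lt_ord, Ordinal.card_add, Ordinal.card_add, Ordinal.card_one]
  have h1 : (1 : Cardinal) < κ := one_lt_aleph0.trans_le hκ.aleph0_le
  exact Cardinal.add_lt_of_lt hκ.aleph0_le
    (Cardinal.add_lt_of_lt hκ.aleph0_le (Cardinal.lt_ord.1 hv) h1) (Cardinal.lt_ord.1 hl)

/-- the length function for the encode direction. -/
def gE (y : κ.ord.ToType → B) : κ.ord.ToType → Ordinal → Ordinal :=
  fun j v => v + 1 + len (e (y j)).1

/-- the length function for the decode direction. -/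
def gD (x : κ.ord.ToType → A) : κ.ord.ToType → Ordinal → Ordinal :=
  fun _ v => v + 1 + len (x (posT κ v))

lemma hgE (y : κ.ord.ToType → B) : ∀ j v, v < gE len e y j v :=
  fun _ v => lt_add_one_add v _

lemma hgD (x : κ.ord.ToType → A) : ∀ j v, v < gD len x j v :=
  fun _ v => lt_add_one_add v _

variable (hlen : ∀ a, len a < κ.ord)

include hκ hlen in
lemma hgE' (y : κ.ord.ToType → B) : ∀ j v, v < κ.ord → gE len e y j v < κ.ord :=
  fun _ _ hv => add_one_add_lt hκ hv (hlen _)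

include hκ hlen in
lemma hgD' (x : κ.ord.ToType → A) : ∀ j v, v < κ.ord → gD len x j v < κ.ord :=
  fun _ _ hv => add_one_add_lt hκ hv (hlen _)

/-- the value of a block `p` at offset `δ` (`0` ↦ head, `1 + j` ↦ tail at `j`). -/
def Fval (p : Σ a : A, ((len a).ToType → A)) (δ : Ordinal) : A :=
  if δ = 0 then p.1
  else if h2 : δ - 1 < len p.1 then p.2 ((Ordinal.ToType.mk (o := (len p.1))) ⟨δ - 1, h2⟩) else p.1

lemma Fval_zero (p : Σ a : A, ((len a).ToType → A)) : Fval len p 0 = p.1 := if_pos rfl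

lemma Fval_off (p : Σ a : A, ((len a).ToType → A)) {δ : Ordinal} (h : δ < len p.1) :
    Fval len p (1 + δ) = p.2 ((Ordinal.ToType.mk (o := (len p.1))) ⟨δ, h⟩) := by
  have h0 : (1 : Ordinal) + δ ≠ 0 :=
    (lt_of_lt_of_le zero_lt_one le_self_add).ne'
  have hc : (1 : Ordinal) + δ - 1 = δ := Ordinal.add_sub_cancel 1 δ
  rw [Fval, if_neg h0, hc, dif_pos h]

/-- the encoding map `(κ → B) → (κ → A)` (concatenation of blocks). -/
def Fenc (y : κ.ord.ToType → B) (t : κ.ord.ToType) : A :=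
  Fval len (e (y (blk (gE len e y) (tyi κ t))))
    (tyi κ t - bstep (gE len e y) (blk (gE len e y) (tyi κ t)))

/-- the decoding map `(κ → A) → (κ → B)`. -/
def Fdec (x : κ.ord.ToType → A) (i : κ.ord.ToType) : B :=
  e.symm ⟨x (posT κ (bstep (gD len x) i)), fun j =>
    x (posT κ (bstep (gD len x) i + 1 +
      (((Ordinal.ToType.mk (o := (len (x (posT κ (bstep (gD len x) i))))))).symm j).1))⟩

include hκ hlen

lemma bstep_gE_lt (y : κ.ord.ToType → B) (i : κ.ord.ToType) :
    bstep (gE len e y) i < κ.ord :=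
  bstep_lt_ord (hgE len e y) hκ (hgE' hκ len e hlen y) i

lemma bstep_gD_lt (x : κ.ord.ToType → A) (i : κ.ord.ToType) :
    bstep (gD len x) i < κ.ord :=
  bstep_lt_ord (hgD len x) hκ (hgD' hκ len hlen x) i

lemma Fenc_head (y : κ.ord.ToType → B) (i : κ.ord.ToType) :
    Fenc len e y (posT κ (bstep (gE len e y) i)) = (e (y i)).1 := by
  have hu : bstep (gE len e y) i < κ.ord := bstep_gE_lt hκ len e hlen y i
  have hblk : blk (gE len e y) (bstep (gE len e y) i) = i :=
    blk_eq (hgE len e y) hu le_rfl (hgE len e y i _)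
  rw [Fenc, tyi_posT κ hu, hblk, Ordinal.sub_self, Fval_zero]

lemma Fenc_tail (y : κ.ord.ToType → B) (i : κ.ord.ToType) {δ : Ordinal}
    (hδ : δ < len (e (y i)).1) :
    Fenc len e y (posT κ (bstep (gE len e y) i + 1 + δ)) =
      (e (y i)).2 ((Ordinal.ToType.mk (o := (len (e (y i)).1))) ⟨δ, hδ⟩) := by
  have hu : bstep (gE len e y) i < κ.ord := bstep_gE_lt hκ len e hlen y i
  have hξ : bstep (gE len e y) i + 1 + δ < κ.ord :=
    add_one_add_lt hκ hu (hδ.trans (hlen _))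
  have hblk : blk (gE len e y) (bstep (gE len e y) i + 1 + δ) = i := by
    apply blk_eq (hgE len e y) hξ
    · rw [add_assoc]; exact le_self_add
    · exact (add_lt_add_iff_left _).2 hδ
  have hoff : bstep (gE len e y) i + 1 + δ - bstep (gE len e y) i = 1 + δ := by
    rw [add_assoc]; exact Ordinal.add_sub_cancel _ _
  rw [Fenc, tyi_posT κ hξ, hblk, hoff, Fval_off]

lemma bstep_gD_Fenc (y : κ.ord.ToType → B) (i : κ.ord.ToType) :
    bstep (gD len (Fenc len e y)) i = bstep (gE len e y) i := by
  induction i using WellFoundedLT.induction with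
  | ind i IH =>
    rw [bstep_def, bstep_def]
    apply iSup_congr
    rintro ⟨j, hj⟩
    rw [IH j hj]
    show bstep (gE len e y) j + 1 + len (Fenc len e y (posT κ (bstep (gE len e y) j))) = _
    rw [Fenc_head hκ len e hlen y j]
    rfl

omit [Nonempty κ.ord.ToType] hκ hlen in
lemma sigma_ext {a a' : A} (f : (len a).ToType → A) (f' : (len a').ToType → A) (ha : a' = a)
    (hf : ∀ δ (h : δ < len a) (h' : δ < len a'),
      f' ((Ordinal.ToType.mk (o := (len a'))) ⟨δ, h'⟩) = f ((Ordinal.ToType.mk (o := (len a))) ⟨δ, h⟩)) :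
    (⟨a', f'⟩ : Σ a : A, ((len a).ToType → A)) = ⟨a, f⟩ := by
  subst ha
  apply congrArg (Sigma.mk a')
  funext j
  have hj := (((Ordinal.ToType.mk (o := (len a')))).symm j).2
  have : (Ordinal.ToType.mk (o := (len a')))
      ⟨(((Ordinal.ToType.mk (o := (len a')))).symm j).1, hj⟩ = j := by
    rw [Subtype.coe_eta, OrderIso.apply_symm_apply]
  rw [← this, hf _ hj hj]

lemma Fdec_Fenc (y : κ.ord.ToType → B) : Fdec len e (Fenc len e y) = y := by
  funext i
  rw [Fdec, Equiv.symm_apply_eq]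
  apply sigma_ext
  case ha =>
    rw [bstep_gD_Fenc hκ len e hlen y i]
    exact Fenc_head hκ len e hlen y i
  case hf =>
    intro δ h h'
    rw [OrderIso.symm_apply_apply]
    show Fenc len e y (posT κ (bstep (gD len (Fenc len e y)) i + 1 + δ)) = _
    rw [bstep_gD_Fenc hκ len e hlen y i]
    rw [Fenc_tail hκ len e hlen y i h]
    rfl

lemma bstep_gE_Fdec (x : κ.ord.ToType → A) (i : κ.ord.ToType) :
    bstep (gE len e (Fdec len e x)) i = bstep (gD len x) i := by
  induction i using WellFoundedLT.induction with
  | ind i IH =>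
    rw [bstep_def, bstep_def]
    apply iSup_congr
    rintro ⟨j, hj⟩
    rw [IH j hj]
    show bstep (gD len x) j + 1 + len (e (Fdec len e x j)).1 = _
    rw [Fdec, Equiv.apply_symm_apply]
    rfl

lemma Fenc_Fdec (x : κ.ord.ToType → A) : Fenc len e (Fdec len e x) = x := by
  funext t
  have hξ : tyi κ t < κ.ord := tyi_lt κ t
  set ξ := tyi κ t with hxi
  obtain ⟨hsp1, hsp2⟩ := blk_spec (g := gD len x) (hgD len x) hξ
  set i := blk (gD len x) ξ with hi
  have hblk' : blk (gE len e (Fdec len e x)) ξ = i := by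
    apply blk_eq (hgE len e (Fdec len e x)) hξ
    · rw [bstep_gE_Fdec hκ len e hlen x i]; exact hsp1
    · rw [bstep_gE_Fdec hκ len e hlen x i]
      show ξ < bstep (gD len x) i + 1 + len (e (Fdec len e x i)).1
      rw [Fdec, Equiv.apply_symm_apply]
      exact hsp2
  rw [Fenc, ← hxi, hblk', bstep_gE_Fdec hκ len e hlen x i]
  rcases eq_or_lt_of_le hsp1 with heq | hlt
  · rw [← heq, Ordinal.sub_self, Fval_zero, Fdec, Equiv.apply_symm_apply]
    show x (posT κ (bstep (gD len x) i)) = x t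
    rw [heq, hxi, posT_tyi]
  · have hd0 : bstep (gD len x) i + (ξ - bstep (gD len x) i) = ξ :=
      Ordinal.add_sub_cancel_of_le hsp1
    have hne : ξ - bstep (gD len x) i ≠ 0 := by
      rw [Ne, Ordinal.sub_eq_zero_iff_le, not_le]; exact hlt
    have h1le : (1 : Ordinal) ≤ ξ - bstep (gD len x) i := Ordinal.one_le_iff_ne_zero.2 hne
    set δ := ξ - bstep (gD len x) i - 1 with hdel
    have hδ1 : 1 + δ = ξ - bstep (gD len x) i := Ordinal.add_sub_cancel_of_le h1le
    have hpos : bstep (gD len x) i + 1 + δ = ξ := by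
      rw [add_assoc, hδ1, hd0]
    have hδlen : δ < len (x (posT κ (bstep (gD len x) i))) := by
      have h2 : ξ < bstep (gD len x) i + 1 + len (x (posT κ (bstep (gD len x) i))) := hsp2
      rw [← hpos] at h2
      exact (add_lt_add_iff_left _).1 h2
    have hpair : e (Fdec len e x i) =
        ⟨x (posT κ (bstep (gD len x) i)), fun j =>
          x (posT κ (bstep (gD len x) i + 1 +
            (((Ordinal.ToType.mk (o := (len (x (posT κ (bstep (gD len x) i))))))).symm j).1))⟩ := by
      unfold Fdec
      exact Equiv.apply_symm_apply e _
    rw [hpair, ← hδ1, Fval_off (h := hδlen)]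
    show x (posT κ (bstep (gD len x) i + 1 +
      (((Ordinal.ToType.mk (o := (len (x (posT κ (bstep (gD len x) i))))))).symm
        (((Ordinal.ToType.mk (o := (len (x (posT κ (bstep (gD len x) i))))))) ⟨δ, hδlen⟩)).1)) = x t
    rw [OrderIso.symm_apply_apply]
    show x (posT κ (bstep (gD len x) i + 1 + δ)) = x t
    rw [hpos, hxi, posT_tyi]

/-- the bijection. -/
def FequivD : (κ.ord.ToType → A) ≃ (κ.ord.ToType → B) where
  toFun := Fdec len e
  invFun := Fenc len e
  left_inv := Fenc_Fdec hκ len e hlen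
  right_inv := Fdec_Fenc hκ len e hlen

lemma Fdec_local (x x' : κ.ord.ToType → A) (i : κ.ord.ToType)
    (hs : bstep (gD len x') i = bstep (gD len x) i)
    (hx : ∀ v, bstep (gD len x) i ≤ v → v < gD len x i (bstep (gD len x) i) →
      x' (posT κ v) = x (posT κ v)) :
    Fdec len e x' i = Fdec len e x i := by
  have hhead : x' (posT κ (bstep (gD len x') i)) = x (posT κ (bstep (gD len x) i)) := by
    rw [hs]
    exact hx _ le_rfl (hgD len x i _)
  unfold Fdec
  apply congrArg e.symm
  apply sigma_ext len _ _ hhead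
  intro δ h h'
  rw [OrderIso.symm_apply_apply, OrderIso.symm_apply_apply]
  show x' (posT κ (bstep (gD len x') i + 1 + δ)) = x (posT κ (bstep (gD len x) i + 1 + δ))
  rw [hs]
  apply hx
  · rw [add_assoc]; exact le_self_add
  · show bstep (gD len x) i + 1 + δ < bstep (gD len x) i + 1 + len (x (posT κ (bstep (gD len x) i)))
    exact (add_lt_add_iff_left _).2 h

lemma Fdec_cont (x : κ.ord.ToType → A) (b : κ.ord.ToType) :
    ∀ x', (∀ t, t < posT κ (bstep (gD len x) (succT b)) → x' t = x t) →
      ∀ i, i < b → Fdec len e x' i = Fdec len e x i := by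
  intro x' hx i hib
  have hS : bstep (gD len x) (succT b) < κ.ord := bstep_gD_lt hκ len hlen x _
  have hagree : ∀ v, v < bstep (gD len x) (succT b) → x' (posT κ v) = x (posT κ v) := by
    intro v hv
    exact hx _ ((posT_lt_posT κ (hv.trans hS) hS).2 hv)
  have hcongr : ∀ j, j ≤ succT b → bstep (gD len x) j = bstep (gD len x') j := by
    apply bstep_congr hκ (hgD len x)
    intro j v _ hv
    show v + 1 + len (x (posT κ v)) = v + 1 + len (x' (posT κ v))
    rw [hagree v hv]
  have hib' : i ≤ succT b := ((lt_succT hκ b).trans_le' hib.le).le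
  apply Fdec_local hκ len e hlen
  · exact (hcongr i hib').symm
  · intro v hv1 hv2
    apply hagree
    have : gD len x i (bstep (gD len x) i) = bstep (gD len x) (succT i) :=
      (bstep_succT hκ (hgD len x) i).symm
    rw [this] at hv2
    refine hv2.trans_le ?_
    exact bstep_mono (hgD len x) ((succT_le_of_lt hκ hib).trans (lt_succT hκ b).le)

lemma Fenc_cont (y : κ.ord.ToType → B) (b : κ.ord.ToType) :
    ∀ y', (∀ i, i < b → y' i = y i) →
      ∀ t, t < b → Fenc len e y' t = Fenc len e y t := by
  intro y' hy t htb
  have hξ : tyi κ t < κ.ord := tyi_lt κ t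
  set ξ := tyi κ t with hxi
  have hcongr : ∀ j, j ≤ b → bstep (gE len e y) j = bstep (gE len e y') j := by
    apply bstep_congr hκ (hgE len e y)
    intro j v hj _
    show v + 1 + len (e (y j)).1 = v + 1 + len (e (y' j)).1
    rw [hy j hj]
  obtain ⟨hsp1, hsp2⟩ := blk_spec (g := gE len e y) (hgE len e y) hξ
  set i := blk (gE len e y) ξ with hi
  have hξb : ξ < bstep (gE len e y) b := by
    calc ξ < tyi κ b := (tyi_lt_tyi κ).2 htb
    _ ≤ bstep (gE len e y) b := tyi_le_bstep (hgE len e y) b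
  have hib : i < b := by
    by_contra hc
    exact absurd (hξb.trans_le (bstep_mono (hgE len e y) (not_lt.1 hc))) (not_lt.2 hsp1)
  have hblk' : blk (gE len e y') ξ = i := by
    apply blk_eq (hgE len e y') hξ
    · rw [← hcongr i hib.le]; exact hsp1
    · show ξ < bstep (gE len e y') i + 1 + len (e (y' i)).1
      rw [← hcongr i hib.le, hy i hib]
      exact hsp2
  rw [Fenc, Fenc, ← hxi, hblk', ← hi, ← hcongr i hib.le, hy i hib]

end main

theorem key {κ : Cardinal} (hκ : κ.IsRegular) [Nonempty κ.ord.ToType] {A B : Type}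
    (len : A → Ordinal) (e : B ≃ Σ a : A, ((len a).ToType → A)) (hlen : ∀ a, len a < κ.ord) :
    Nonempty (GSeq κ.ord.ToType A ≃ₜ GSeq κ.ord.ToType B) := by
  apply homeo_aux (FequivD hκ len e hlen)
  · intro x b
    exact ⟨posT κ (bstep (gD len x) (succT b)), fun x' hx' i hi =>
      Fdec_cont hκ len e hlen x b x' hx' i hi⟩
  · intro y b
    exact ⟨b, fun y' hy' t ht => Fenc_cont hκ len e hlen y b y' hy' t ht⟩

lemma nonempty_toType {c : Cardinal} (hc : c ≠ 0) : Nonempty c.ord.ToType := by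
  rw [Ordinal.nonempty_toType_iff]
  have : (0 : Ordinal) < c.ord := by
    rw [Cardinal.lt_ord, Ordinal.card_zero]
    exact pos_iff_ne_zero.2 hc
  exact this.ne'


section cardinalities

variable (κ lam : Cardinal.{0}) (hκ : κ.IsRegular) (hlam : ℵ₀ ≤ lam) (hκlam : κ ≤ lam)

include hκ in
lemma self_le_powerlt : lam ≤ lam ^< κ := by
  have := Cardinal.le_powerlt lam (one_lt_aleph0.trans_le hκ.aleph0_le)
  rwa [power_one] at this

include hκ hlam hκlam

lemma exists_code :
    ∃ len : lam.ord.ToType → Ordinal, (∀ a, len a < κ.ord) ∧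
      Nonempty ((lam ^< κ).ord.ToType ≃
        Σ a : lam.ord.ToType, ((len a).ToType → lam.ord.ToType)) := by
  have hne : Nonempty κ.ord.ToType := nonempty_toType hκ.pos.ne'
  obtain ⟨f⟩ : Nonempty (κ.ord.ToType ↪ lam.ord.ToType) := by
    rw [← Cardinal.le_def, Cardinal.mk_ord_toType, Cardinal.mk_ord_toType]
    exact hκlam
  set q := Function.invFun f with hqdef
  have hqs : Function.Surjective q := Function.invFun_surjective f.injective
  refine ⟨fun a => ((tyi κ (q a)).card).ord, fun a => ?_, ?_⟩
  · exact Cardinal.ord_lt_ord.2 (Cardinal.lt_ord.1 (tyi_lt κ (q a)))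
  · rw [← Cardinal.eq]
    have hmk : #(Σ a : lam.ord.ToType, ((((tyi κ (q a)).card).ord).ToType → lam.ord.ToType))
        = Cardinal.sum (fun a : lam.ord.ToType => lam ^ (tyi κ (q a)).card) := by
      rw [Cardinal.mk_sigma]
      congr 1; funext a
      rw [← Cardinal.power_def, Cardinal.mk_toType, Cardinal.card_ord, Cardinal.mk_ord_toType]
    rw [Cardinal.mk_ord_toType, hmk]
    apply le_antisymm
    · rw [Cardinal.powerlt_le]
      intro c hc
      obtain ⟨a, ha⟩ := hqs (posT κ c.ord)
      have hgc : lam ^ c = lam ^ (tyi κ (q a)).card := by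
        rw [ha, tyi_posT κ (Cardinal.ord_lt_ord.2 hc), Cardinal.card_ord]
      rw [hgc]
      exact Cardinal.le_sum _ a
    · calc Cardinal.sum (fun a : lam.ord.ToType => lam ^ (tyi κ (q a)).card)
          ≤ #(lam.ord.ToType) * ⨆ a : lam.ord.ToType, lam ^ (tyi κ (q a)).card :=
            Cardinal.sum_le_mk_mul_iSup _
      _ ≤ lam * (lam ^< κ) := by
          rw [Cardinal.mk_ord_toType]
          exact mul_le_mul' le_rfl (ciSup_le' fun a =>
            Cardinal.le_powerlt lam (Cardinal.lt_ord.1 (tyi_lt κ (q a))))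
      _ = lam ^< κ := Cardinal.mul_eq_right (hlam.trans (self_le_powerlt κ lam hκ))
          (self_le_powerlt κ lam hκ) (aleph0_pos.trans_le hlam).ne'

lemma part1 : (lam ^< κ) ^< κ = lam ^< κ := by
  have hne : Nonempty κ.ord.ToType := nonempty_toType hκ.pos.ne'
  have hlamle : lam ≤ lam ^< κ := self_le_powerlt κ lam hκ
  have h0 : ℵ₀ ≤ lam ^< κ := hlam.trans hlamle
  have hlam0 : lam ≠ 0 := (aleph0_pos.trans_le hlam).ne'
  have hBne : Nonempty ((lam ^< κ).ord.ToType) :=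
    nonempty_toType (aleph0_pos.trans_le h0).ne'
  apply le_antisymm
  · rw [Cardinal.powerlt_le]
    intro c hc
    have hγ : #(c.ord.ToType) = c := Cardinal.mk_ord_toType c
    have step1 : (lam ^< κ) ^ c = #(c.ord.ToType → (lam ^< κ).ord.ToType) := by
      rw [← Cardinal.power_def, Cardinal.mk_ord_toType, Cardinal.mk_ord_toType]
    have hbdd : BddAbove (range fun d : Iio κ => lam ^ (d : Cardinal)) := by
      rw [← image_eq_range]
      exact Cardinal.bddAbove_image.{0, 0} _ bddAbove_Iio
    have hex : ∀ ξ : (lam ^< κ).ord.ToType,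
        ∃ d : Iio κ,
          ((((Ordinal.ToType.mk (o := (lam ^< κ).ord))).symm ξ).1).card < lam ^ (d : Cardinal) := by
      intro ξ
      have h1 : ((((Ordinal.ToType.mk (o := (lam ^< κ).ord))).symm ξ).1).card < lam ^< κ :=
        Cardinal.lt_ord.1 (((Ordinal.ToType.mk (o := (lam ^< κ).ord))).symm ξ).2
      unfold Cardinal.powerlt at h1
      have : Nonempty (Iio κ) := ⟨⟨0, hκ.pos⟩⟩
      exact (lt_ciSup_iff hbdd).1 h1
    choose bnd hbnd using hex
    have hsur : ∃ Ψ : (Σ dd : κ.ord.ToType,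
          (c.ord.ToType → (lam ^ (tyi κ dd).card).ord.ToType)) →
          (c.ord.ToType → (lam ^< κ).ord.ToType), Function.Surjective Ψ := by
      refine ⟨fun p i =>
        if h : (((Ordinal.ToType.mk (o := (lam ^ (tyi κ p.1).card).ord))).symm (p.2 i)).1
            < (lam ^< κ).ord
        then (Ordinal.ToType.mk (o := (lam ^< κ).ord))
          ⟨(((Ordinal.ToType.mk (o := (lam ^ (tyi κ p.1).card).ord))).symm (p.2 i)).1, h⟩
        else Classical.arbitrary _, ?_⟩
      intro g
      set D := ⨆ i : c.ord.ToType, (bnd (g i) : Cardinal) with hD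
      have hDlt : D < κ := by
        apply Cardinal.iSup_lt_of_isRegular hκ (by rw [hγ]; exact hc)
        exact fun i => (bnd (g i)).2
      have hcard : (tyi κ (posT κ D.ord)).card = D := by
        rw [tyi_posT κ (Cardinal.ord_lt_ord.2 hDlt), Cardinal.card_ord]
      have hco : ∀ i, ((((Ordinal.ToType.mk (o := (lam ^< κ).ord))).symm (g i)).1).card
          < lam ^ (tyi κ (posT κ D.ord)).card := by
        intro i
        rw [hcard]
        exact (hbnd (g i)).trans_le (Cardinal.power_le_power_left hlam0
          (le_ciSup (Cardinal.bddAbove_range _) i))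
      refine ⟨⟨posT κ D.ord, fun i => (Ordinal.ToType.mk)
        ⟨(((Ordinal.ToType.mk (o := (lam ^< κ).ord))).symm (g i)).1,
          Cardinal.lt_ord.2 (hco i)⟩⟩, ?_⟩
      funext i
      show (if h : (((Ordinal.ToType.mk (o := (lam ^ (tyi κ (posT κ D.ord)).card).ord))).symm
          ((Ordinal.ToType.mk)
            ⟨(((Ordinal.ToType.mk (o := (lam ^< κ).ord))).symm (g i)).1,
              Cardinal.lt_ord.2 (hco i)⟩)).1 < (lam ^< κ).ord
        then (Ordinal.ToType.mk (o := (lam ^< κ).ord))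
          ⟨(((Ordinal.ToType.mk (o := (lam ^ (tyi κ (posT κ D.ord)).card).ord))).symm
            ((Ordinal.ToType.mk)
              ⟨(((Ordinal.ToType.mk (o := (lam ^< κ).ord))).symm (g i)).1,
                Cardinal.lt_ord.2 (hco i)⟩)).1, h⟩
        else Classical.arbitrary _) = g i
      rw [OrderIso.symm_apply_apply]
      show (if h : ((((Ordinal.ToType.mk (o := (lam ^< κ).ord))).symm (g i)) : Ordinal)
            < (lam ^< κ).ord then
          (Ordinal.ToType.mk (o := (lam ^< κ).ord))
            ⟨((((Ordinal.ToType.mk (o := (lam ^< κ).ord))).symm (g i)) : Ordinal), h⟩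
        else Classical.arbitrary _) = g i
      rw [dif_pos (show ((((Ordinal.ToType.mk (o := (lam ^< κ).ord))).symm (g i)) : Ordinal)
        < (lam ^< κ).ord from (((Ordinal.ToType.mk (o := (lam ^< κ).ord))).symm (g i)).2)]
      rw [Subtype.coe_eta, OrderIso.apply_symm_apply]
    obtain ⟨Ψ, hΨ⟩ := hsur
    calc (lam ^< κ) ^ c = #(c.ord.ToType → (lam ^< κ).ord.ToType) := step1
    _ ≤ #(Σ dd : κ.ord.ToType, (c.ord.ToType → (lam ^ (tyi κ dd).card).ord.ToType)) :=
        Cardinal.mk_le_of_surjective hΨ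
    _ = Cardinal.sum (fun dd : κ.ord.ToType => (lam ^ (tyi κ dd).card) ^ c) := by
        rw [Cardinal.mk_sigma]; congr 1; funext dd
        rw [← Cardinal.power_def, Cardinal.mk_ord_toType, Cardinal.mk_ord_toType]
    _ ≤ Cardinal.sum (fun _ : κ.ord.ToType => lam ^< κ) := by
        apply Cardinal.sum_le_sum
        intro dd
        rw [← Cardinal.power_mul]
        exact Cardinal.le_powerlt lam (Cardinal.mul_lt_of_lt hκ.aleph0_le
          (Cardinal.lt_ord.1 (tyi_lt κ dd)) hc)
    _ = #(κ.ord.ToType) * (lam ^< κ) := Cardinal.sum_const' _ _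
    _ = κ * (lam ^< κ) := by rw [Cardinal.mk_ord_toType]
    _ = lam ^< κ := Cardinal.mul_eq_right h0 (hκlam.trans hlamle) hκ.pos.ne'
  · have := Cardinal.le_powerlt (lam ^< κ) (one_lt_aleph0.trans_le hκ.aleph0_le)
    rwa [power_one] at this

end cardinalities


end S13


/-- The weight of a topological space: the least cardinality of a basis for its topology. -/
def tweight (X : Type) [TopologicalSpace X] : Cardinal :=
  ⨅ B : {B : Set (Set X) // TopologicalSpace.IsTopologicalBasis B}, #↥(B.1)

/-- `S` is a positively totally ordered monoid (on top of given `AddMonoid` and `LinearOrder`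
structures): the addition is weakly monotone in both arguments, `0` is the least element, and
the positive cone `S⁺ = {a | 0 < a}` is nonempty. -/
structure IsPTOM (S : Type*) [AddMonoid S] [LinearOrder S] : Prop where
  add_le_add : ∀ a b c d : S, a ≤ b → c ≤ d → a + c ≤ b + d
  zero_le : ∀ a : S, 0 ≤ a
  exists_pos : ∃ a : S, 0 < a

/-- The sum of `f` over a finite set `F` of indices, taken in increasing order of the indices. -/
def finSum {ι : Type*} [LinearOrder ι] {S : Type*} [AddMonoid S] (f : ι → S) (F : Finset ι) : S :=
  ((F.sort (· ≤ ·)).map f).sum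

/-- `μ` is a continuous measure: every singleton is measurable and has measure `0`. -/
def MeasureContinuous {X : Type} [TopologicalSpace X] {S : Type*} [Zero S]
    (M : Set (Set X)) (μ : Set X → S) : Prop :=
  ∀ x : X, {x} ∈ M ∧ μ {x} = 0

/-- for infinite cardinals `κ ≤ λ` with `κ` regular and `λ' = λ^{<κ}`, we have
`(λ')^{<κ} = λ'` and `ᵏλ` is homeomorphic to `ᵏλ'` (both with the bounded topology). -/
theorem statement_13 (κ lam : Cardinal) (hκ : κ.IsRegular) (hlam : ℵ₀ ≤ lam)
    (hκlam : κ ≤ lam) :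
    (lam ^< κ) ^< κ = lam ^< κ ∧
    Nonempty (GSeq κ.ord.ToType lam.ord.ToType ≃ₜ GSeq κ.ord.ToType (lam ^< κ).ord.ToType) := by
  constructor
  · exact S13.part1 κ lam hκ hlam hκlam
  · have hne : Nonempty κ.ord.ToType := S13.nonempty_toType hκ.pos.ne'
    obtain ⟨len, hlen, ⟨e⟩⟩ := S13.exists_code κ lam hκ hlam hκlam
    exact S13.key hκ len e hlen

end
end

section
/- Let λ be an infinite cardinal and set λ' = 2^{<λ}. Then (λ')^{<cof(λ)} = λ', where cof(λ) is the cofinality of λ, and the space ᴧ2 of all functions from λ to 2 with the bounded topology is homeomorphic to a closed subspace of the space of all functions from cof(λ) to λ' with the bounded topology. -/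
open Cardinal Set

noncomputable section

/- ### Auxiliary lemmas -/

instance aux_instIsWellOrderToType (o : Ordinal) : IsWellOrder o.ToType (· < ·) :=
  isWellOrder_lt

lemma GSeq.isOpen_cone {ι A : Type} [LinearOrder ι] (z : ι → A) (b : ι) :
    IsOpen {y : GSeq ι A | ∀ i, i < b → y i = z i} :=
  TopologicalSpace.isOpen_generateFrom_of_mem ⟨z, b, rfl⟩

lemma GSeq.isOpen_of_cones {ι A : Type} [LinearOrder ι] {s : Set (GSeq ι A)}
    (h : ∀ x ∈ s, ∃ b : ι, {y : GSeq ι A | ∀ i, i < b → y i = x i} ⊆ s) : IsOpen s := by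
  have hs : s = ⋃ x : s, {y : GSeq ι A | ∀ i, i < (h x.1 x.2).choose → y i = x.1 i} := by
    ext w
    simp only [mem_iUnion]
    constructor
    · intro hw; exact ⟨⟨w, hw⟩, fun i _ => rfl⟩
    · rintro ⟨x, hx⟩; exact (h x.1 x.2).choose_spec hx
  rw [hs]
  exact isOpen_iUnion fun x => GSeq.isOpen_cone _ _

lemma GSeq.continuous_to {X : Type*} [TopologicalSpace X] {ι A : Type} [LinearOrder ι]
    {f : X → GSeq ι A}
    (h : ∀ (z : ι → A) (b : ι), IsOpen (f ⁻¹' {y : GSeq ι A | ∀ i, i < b → y i = z i})) :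
    Continuous f := by
  have h2 : @Continuous X (GSeq ι A) _ (TopologicalSpace.generateFrom
      {C : Set (GSeq ι A) | ∃ (x : ι → A) (b : ι),
        C = {y : GSeq ι A | ∀ i, i < b → y i = x i}}) f := by
    rw [continuous_generateFrom_iff]
    rintro s ⟨z, b, rfl⟩
    exact h z b
  exact h2

lemma aux_lam_le {lam : Cardinal} (hlam : ℵ₀ ≤ lam) : lam ≤ 2 ^< lam := by
  apply le_of_forall_lt
  intro c hc
  exact lt_of_lt_of_le (cantor c) (le_powerlt 2 hc)

open Ordinal in
lemma aux_pow_le {lam γ : Cardinal} (hlam : ℵ₀ ≤ lam) (hγ : ℵ₀ ≤ γ)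
    (hγκ : γ < lam.ord.cof) : (2 ^< lam) ^ γ ≤ 2 ^< lam := by
  have hlamle : lam ≤ 2 ^< lam := aux_lam_le hlam
  have hlam'inf : ℵ₀ ≤ 2 ^< lam := hlam.trans hlamle
  have hγlam : γ < lam := hγκ.trans_le (Ordinal.cof_ord_le lam)
  have hG : #(γ.out) = γ := mk_out γ
  have hA : #((2 ^< lam).ord.ToType) = 2 ^< lam := by rw [mk_toType, card_ord]
  have hL : #(lam.ord.ToType) = lam := by rw [mk_toType, card_ord]
  -- the "bounded" pieces
  set B : lam.ord.ToType → Set ((2 ^< lam).ord.ToType) := fun l =>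
    {a | typein (α := (2 ^< lam).ord.ToType) (· < ·) a <
      ((2 : Cardinal) ^ (typein (α := lam.ord.ToType) (· < ·) l).card).ord} with hBdef
  set S : lam.ord.ToType → Set (γ.out → (2 ^< lam).ord.ToType) := fun l =>
    {f | ∀ j, f j ∈ B l} with hSdef
  -- every function lies in some S l
  have claim1 : ∀ f : γ.out → (2 ^< lam).ord.ToType, ∃ l, f ∈ S l := by
    intro f
    have hstep : ∀ j : γ.out, ∃ μ : ↥(Iio lam),
        (typein (α := (2 ^< lam).ord.ToType) (· < ·) (f j)).card < (2 : Cardinal) ^ μ.1 := by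
      intro j
      by_contra hcon
      push_neg at hcon
      have h1 : 2 ^< lam ≤ (typein (α := (2 ^< lam).ord.ToType) (· < ·) (f j)).card :=
        powerlt_le.2 fun x hx => hcon ⟨x, hx⟩
      exact absurd (card_typein_toType_lt (2 ^< lam) (f j)) (not_lt.2 h1)
    choose μf hμf using hstep
    have hbd : (⨆ j : γ.out, ((μf j).1).ord) < lam.ord := by
      apply Ordinal.iSup_lt_ord
      · rwa [hG]
      · intro j
        exact (Cardinal.ord_lt_ord).2 (μf j).2
    have hbd' : (⨆ j : γ.out, ((μf j).1).ord) < type ((· < ·) : lam.ord.ToType → _ → Prop) := by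
      rwa [type_toType]
    refine ⟨enum (α := lam.ord.ToType) (· < ·) ⟨_, hbd'⟩, ?_⟩
    have htl : typein (α := lam.ord.ToType) (· < ·)
        (enum (α := lam.ord.ToType) (· < ·) ⟨_, hbd'⟩) =
        ⨆ j : γ.out, ((μf j).1).ord := typein_enum _ _
    intro j
    show typein (α := (2 ^< lam).ord.ToType) (· < ·) (f j) <
      ((2 : Cardinal) ^ (typein (α := lam.ord.ToType) (· < ·) _).card).ord
    rw [htl, Cardinal.lt_ord]
    refine lt_of_lt_of_le (hμf j) (power_le_power_left two_ne_zero ?_)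
    calc (μf j).1 = ((μf j).1).ord.card := (card_ord _).symm
      _ ≤ (⨆ j : γ.out, ((μf j).1).ord).card := Ordinal.card_le_card (Ordinal.le_iSup _ j)
  -- each S l is small
  have claim2 : ∀ l : lam.ord.ToType, #(S l) ≤ 2 ^< lam := by
    intro l
    set μ := (typein ((· < ·) : lam.ord.ToType → _ → Prop) l).card with hμdef
    have hBcard : #(B l) ≤ (2 : Cardinal) ^ μ := by
      have hcodlt : ∀ a : B l, typein (α := (2 ^< lam).ord.ToType) (· < ·) a.1 <
          type (α := ((2 : Cardinal) ^ μ).ord.ToType) (· < ·) := by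
        intro a
        rw [type_toType]
        exact a.2
      have hinj : Function.Injective
          (fun a : B l => enum (α := ((2 : Cardinal) ^ μ).ord.ToType) (· < ·)
            ⟨typein (α := (2 ^< lam).ord.ToType) (· < ·) a.1, hcodlt a⟩) := by
        intro a b hab
        have h1 := congrArg
          (typein (α := ((2 : Cardinal) ^ μ).ord.ToType) (· < ·)) hab
        rw [typein_enum, typein_enum] at h1
        exact Subtype.ext (typein_injective _ h1)
      refine (mk_le_of_injective hinj).trans ?_
      rw [mk_toType, card_ord]
    have hSinj : Function.Injective (fun f : S l => (fun j => (⟨f.1 j, f.2 j⟩ : B l))) := by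
      intro f1 f2 h
      apply Subtype.ext
      funext j
      exact congrArg Subtype.val (congrFun h j)
    have hle1 : #(S l) ≤ #(B l) ^ γ := by
      refine (mk_le_of_injective hSinj).trans_eq ?_
      rw [← power_def, hG]
    have hμlam : μ < lam := card_typein_toType_lt lam l
    have hmul : μ * γ < lam := by
      refine lt_of_le_of_lt (mul_le_max μ γ) ?_
      exact max_lt (max_lt hμlam hγlam) (hγ.trans_lt hγlam)
    calc #(S l) ≤ #(B l) ^ γ := hle1
      _ ≤ ((2 : Cardinal) ^ μ) ^ γ := power_le_power_right hBcard
      _ = (2 : Cardinal) ^ (μ * γ) := power_mul.symm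
      _ ≤ 2 ^< lam := le_powerlt 2 hmul
  have hfun : (2 ^< lam) ^ γ = #(γ.out → (2 ^< lam).ord.ToType) := by
    conv_lhs => rw [← hA, ← hG]
    exact power_def _ _
  calc (2 ^< lam) ^ γ = #(γ.out → (2 ^< lam).ord.ToType) := hfun
    _ = #(univ : Set (γ.out → (2 ^< lam).ord.ToType)) := mk_univ.symm
    _ ≤ #(⋃ l, S l) := mk_le_mk_of_subset (fun f _ => mem_iUnion.2 (claim1 f))
    _ ≤ #(lam.ord.ToType) * ⨆ l, #(S l) := mk_iUnion_le _
    _ ≤ lam * (2 ^< lam) := mul_le_mul' hL.le (ciSup_le' claim2)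
    _ = 2 ^< lam := by rw [mul_eq_max hlam hlam'inf, max_eq_right hlamle]

open Ordinal in
lemma aux_part2 (lam : Cardinal) (hlam : ℵ₀ ≤ lam) :
    ∃ C : Set (GSeq (lam.ord.cof).ord.ToType ((2 : Cardinal) ^< lam).ord.ToType),
      IsClosed C ∧ Nonempty (GSeq lam.ord.ToType (Fin 2) ≃ₜ ↥C) := by
  have hκinf : ℵ₀ ≤ lam.ord.cof := Ordinal.aleph0_le_cof.2 (Cardinal.isSuccLimit_ord hlam)
  haveI : NoMaxOrder lam.ord.ToType := Cardinal.noMaxOrder hlam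
  haveI : NoMaxOrder (lam.ord.cof).ord.ToType := Cardinal.noMaxOrder hκinf
  -- an unbounded family g : K → L
  obtain ⟨Su, hSunb, hScard⟩ := Order.exists_cof_eq (α := lam.ord.ToType)
  have hSK : Nonempty ((lam.ord.cof).ord.ToType ≃ ↥Su) := by
    rw [← Cardinal.eq, mk_toType, card_ord, hScard, Ordinal.cof_toType]
  obtain ⟨e⟩ := hSK
  set g : (lam.ord.cof).ord.ToType → lam.ord.ToType := fun i => (e i).1 with hgdef
  have hgub : ∀ a : lam.ord.ToType, ∃ i, a ≤ g i := by
    intro a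
    obtain ⟨b, hbS, hba⟩ := hSunb a
    refine ⟨e.symm ⟨b, hbS⟩, ?_⟩
    have hb : g (e.symm ⟨b, hbS⟩) = b := congrArg Subtype.val (e.apply_symm_apply ⟨b, hbS⟩)
    rw [hb]
    exact hba
  have hgub' : ∀ a : lam.ord.ToType, ∃ i, a < g i := by
    intro a
    obtain ⟨a', haa'⟩ := exists_gt a
    obtain ⟨i, hi⟩ := hgub a'
    exact ⟨i, haa'.trans_le hi⟩
  -- coding functions
  have hcode : ∀ i : (lam.ord.cof).ord.ToType,
      ∃ c : (↥(Iio (g i)) → Fin 2) → ((2 : Cardinal) ^< lam).ord.ToType,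
        Function.Injective c := by
    intro i
    have h1 : #(↥(Iio (g i)) → Fin 2) ≤ #(((2 : Cardinal) ^< lam).ord.ToType) := by
      rw [mk_toType, card_ord]
      have h2 : #(↥(Iio (g i)) → Fin 2) = (2 : Cardinal) ^ #(↥(Iio (g i))) := by
        rw [← power_def, mk_fin]
        norm_cast
      rw [h2]
      exact le_powerlt 2 (mk_Iio_ord_toType (g i))
    obtain ⟨emb⟩ := Cardinal.le_def _ _ |>.1 h1
    exact ⟨emb, emb.injective⟩
  choose c hc using hcode
  -- the embedding
  set Φ : GSeq lam.ord.ToType (Fin 2) → GSeq (lam.ord.cof).ord.ToType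
      ((2 : Cardinal) ^< lam).ord.ToType :=
    fun x i => c i (fun j => x j.1) with hΦdef
  have hΦinj : Function.Injective Φ := by
    intro x y hxy
    funext a
    obtain ⟨i, hi⟩ := hgub' a
    have h1 : c i (fun j => x j.1) = c i (fun j => y j.1) := congrFun hxy i
    exact congrFun (hc i h1) ⟨a, hi⟩
  -- key restriction lemma: Φ x i determines x on Iio (g i)
  have hres : ∀ (i : (lam.ord.cof).ord.ToType) (x y : GSeq lam.ord.ToType (Fin 2)),
      Φ x i = Φ y i → ∀ a, a < g i → x a = y a := by
    intro i x y h a ha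
    exact congrFun (hc i h) ⟨a, ha⟩
  refine ⟨Set.range Φ, ?_, ?_⟩
  · -- closedness
    rw [← isOpen_compl_iff]
    apply GSeq.isOpen_of_cones
    intro y hy
    by_contra hcon
    push_neg at hcon
    have hex : ∀ b, ∃ x : GSeq lam.ord.ToType (Fin 2), ∀ i, i < b → Φ x i = y i := by
      intro b
      obtain ⟨w, hw1, hw2⟩ := not_subset.1 (hcon b)
      obtain ⟨x, rfl⟩ := not_not.1 hw2
      exact ⟨x, fun i hib => hw1 i hib⟩
    choose xs hxs using hex
    apply hy
    choose ia hia using hgub'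
    choose sb hsb using fun i : (lam.ord.cof).ord.ToType => exists_gt i
    -- coherence of the xs
    have hcoh : ∀ (i b1 b2), i < b1 → i < b2 → ∀ a, a < g i → xs b1 a = xs b2 a := by
      intro i b1 b2 h1 h2 a ha
      exact hres i (xs b1) (xs b2) ((hxs b1 i h1).trans (hxs b2 i h2).symm) a ha
    set x : GSeq lam.ord.ToType (Fin 2) := fun a => xs (sb (ia a)) a with hxdef
    refine ⟨x, ?_⟩
    funext i
    have hyi : Φ (xs (sb i)) i = y i := hxs (sb i) i (hsb i)
    rw [← hyi]
    show c i (fun j => x j.1) = c i (fun j => xs (sb i) j.1)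
    congr 1
    funext j
    obtain ⟨b', hb'⟩ := exists_gt (max i (ia j.1))
    have hb'i : i < b' := (le_max_left _ _).trans_lt hb'
    have hb'ia : ia j.1 < b' := (le_max_right _ _).trans_lt hb'
    have e1 : x j.1 = xs b' j.1 :=
      hcoh (ia j.1) (sb (ia j.1)) b' (hsb _) hb'ia j.1 (hia j.1)
    have e2 : xs b' j.1 = xs (sb i) j.1 := hcoh i b' (sb i) hb'i (hsb i) j.1 j.2
    exact e1.trans e2
  · -- the homeomorphism
    set E : GSeq lam.ord.ToType (Fin 2) ≃ ↥(Set.range Φ) :=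
      Equiv.ofBijective (fun x => ⟨Φ x, Set.mem_range_self x⟩)
        ⟨fun x y h => hΦinj (congrArg Subtype.val h),
         by rintro ⟨w, x, rfl⟩; exact ⟨x, rfl⟩⟩ with hEdef
    have hEval : ∀ y : ↥(Set.range Φ), Φ (E.symm y) = y.1 := by
      intro y
      exact congrArg Subtype.val (E.apply_symm_apply y)
    -- forward continuity
    have hΦcont : Continuous Φ := by
      apply GSeq.continuous_to
      intro z b
      apply GSeq.isOpen_of_cones
      intro x hx
      -- bound the g i for i < b
      have hbd : (⨆ i : ↥(Iio b), typein ((· < ·) : lam.ord.ToType → _ → Prop) (g i.1))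
          < lam.ord := by
        apply Ordinal.iSup_lt_ord
        · exact mk_Iio_ord_toType b
        · intro i
          exact typein_lt_self _
      have hbd' : (⨆ i : ↥(Iio b), typein ((· < ·) : lam.ord.ToType → _ → Prop) (g i.1))
          < type ((· < ·) : lam.ord.ToType → _ → Prop) := by
        rwa [type_toType]
      have ha' : ∀ i, i < b → g i ≤ enum (α := lam.ord.ToType) (· < ·) ⟨_, hbd'⟩ := by
        intro i hib
        rw [← typein_le_typein' lam.ord]
        have h3 : typein ((· < ·) : lam.ord.ToType → _ → Prop) (g i) ≤
            ⨆ i : ↥(Iio b), typein ((· < ·) : lam.ord.ToType → _ → Prop) (g i.1) :=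
          Ordinal.le_iSup _ (⟨i, hib⟩ : ↥(Iio b))
        rwa [typein_enum]
      refine ⟨enum (α := lam.ord.ToType) (· < ·) ⟨_, hbd'⟩, ?_⟩
      intro w hw i hib
      have hweq : (fun j : ↥(Iio (g i)) => w j.1) = fun j => x j.1 := by
        funext j
        exact hw j.1 (lt_of_lt_of_le j.2 (ha' i hib))
      show c i (fun j => w j.1) = z i
      rw [hweq]
      exact hx i hib
    -- inverse continuity
    have hEsymmcont : Continuous (E.symm : ↥(Set.range Φ) → GSeq lam.ord.ToType (Fin 2)) := by
      apply GSeq.continuous_to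
      intro z a
      obtain ⟨i0, hi0⟩ := hgub a
      obtain ⟨b0, hb0⟩ := exists_gt i0
      set U := ⋃ x : {x : GSeq lam.ord.ToType (Fin 2) | ∀ j, j < a → x j = z j},
          {w : GSeq (lam.ord.cof).ord.ToType ((2 : Cardinal) ^< lam).ord.ToType |
            ∀ i, i < b0 → w i = Φ x.1 i} with hUdef
      have hUopen : IsOpen U := isOpen_iUnion fun x => GSeq.isOpen_cone _ _
      have hkey : ((E.symm : ↥(Set.range Φ) → GSeq lam.ord.ToType (Fin 2)) ⁻¹'
          {y : GSeq lam.ord.ToType (Fin 2) | ∀ j, j < a → y j = z j}) =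
          Subtype.val ⁻¹' U := by
        ext y
        constructor
        · intro hy
          exact mem_iUnion.2 ⟨⟨E.symm y, hy⟩, fun i _ => (congrFun (hEval y) i).symm⟩
        · intro hy
          obtain ⟨x, hxw⟩ := mem_iUnion.1 hy
          intro j hja
          have h1 : Φ (E.symm y) i0 = Φ x.1 i0 := by
            rw [hEval y]
            exact hxw i0 hb0
          have h2 : (E.symm y) j = x.1 j := hres i0 _ _ h1 j (hja.trans_le hi0)
          rw [h2]
          exact x.2 j hja
      rw [hkey]
      exact hUopen.preimage continuous_subtype_val
    exact ⟨⟨E, hΦcont.subtype_mk _, hEsymmcont⟩⟩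

open Ordinal in
/-- for an infinite cardinal `λ` and `λ' = 2^{<λ}`, we have
`(λ')^{<cof(λ)} = λ'`, and `ᴧ2` is homeomorphic to a closed subspace of the space of functions
from `cof(λ)` to `λ'` (with the bounded topologies). -/
theorem statement_14 (lam : Cardinal) (hlam : ℵ₀ ≤ lam) :
    ((2 : Cardinal) ^< lam) ^< lam.ord.cof = (2 : Cardinal) ^< lam ∧
    ∃ C : Set (GSeq (lam.ord.cof).ord.ToType ((2 : Cardinal) ^< lam).ord.ToType),
      IsClosed C ∧ Nonempty (GSeq lam.ord.ToType (Fin 2) ≃ₜ ↥C) := by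
  have hκinf : ℵ₀ ≤ lam.ord.cof := Ordinal.aleph0_le_cof.2 (Cardinal.isSuccLimit_ord hlam)
  have hlam'inf : ℵ₀ ≤ 2 ^< lam := hlam.trans (aux_lam_le hlam)
  refine ⟨?_, aux_part2 lam hlam⟩
  apply le_antisymm
  · rw [powerlt_le]
    intro γ hγκ
    rcases lt_or_ge γ ℵ₀ with hfin | hinf
    · obtain ⟨n, rfl⟩ := lt_aleph0.1 hfin
      rcases Nat.eq_zero_or_pos n with hn | hn
      · subst hn
        rw [Nat.cast_zero, power_zero]
        exact one_le_aleph0.trans hlam'inf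
      · rw [power_natCast, power_nat_eq hlam'inf hn]
    · exact aux_pow_le hlam hinf hγκ
  · have h1 : (2 ^< lam) ^ (1 : Cardinal) ≤ (2 ^< lam) ^< lam.ord.cof :=
      le_powerlt _ (one_lt_aleph0.trans_le hκinf)
    rwa [power_one] at h1

end
end

section
/- Let S be a positively totally ordered monoid. Then exactly one of the following holds: (1) there is c ∈ S⁺ such that b + b ≥ c for every b ∈ S⁺; (2) Deg(S) = ℵ₀ and S⁺ contains a sequence (a_i)_{i<ω}, coinitial in S⁺, which is strongly decreasing (a_i + a_i < a_j whenever j < i < ω) and whose set of values {a_i : i < ω} is Archimedean; (3) Deg(S) = δ is an infinite cardinal and S⁺ contains a sequence (a_i)_{i<δ}, coinitial in S⁺, which is nowhere Archimedean decreasing, i.e., a_i ≪ a_j whenever j < i < δ. -/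
open Cardinal Set

noncomputable section

/-- The degree of `S`: the least cardinality of a subset of the positive cone `S⁺`
that is coinitial in `S⁺`. -/
def degree (S : Type*) [Zero S] [LinearOrder S] : Cardinal :=
  ⨅ A : {A : Set S // (∀ a ∈ A, 0 < a) ∧ ∀ ε : S, 0 < ε → ∃ a ∈ A, a ≤ ε}, #↥(A.1)

/-- Case (1): there is `c ∈ S⁺` with `b + b ≥ c` for every `b ∈ S⁺`. -/
def MonoidCase1 (S : Type) [AddMonoid S] [LinearOrder S] : Prop :=
  ∃ c : S, 0 < c ∧ ∀ b : S, 0 < b → c ≤ b + b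

/-- Case (2): `Deg(S) = ℵ₀` and `S⁺` contains a countable, coinitial, strongly decreasing
sequence whose set of values is Archimedean. -/
def MonoidCase2 (S : Type) [AddMonoid S] [LinearOrder S] : Prop :=
  degree S = ℵ₀ ∧ ∃ a : ℕ → S,
    (∀ i, 0 < a i) ∧ (∀ ε : S, 0 < ε → ∃ i, a i ≤ ε) ∧
    (∀ i j : ℕ, j < i → a i + a i < a j) ∧
    (∀ i j : ℕ, 0 < a i → a i < a j → ∃ n : ℕ, a j ≤ n • a i)

/-- Case (3): `Deg(S)` is infinite and `S⁺` contains a coinitial, nowhere Archimedean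
decreasing sequence of length `Deg(S)`. -/
def MonoidCase3 (S : Type) [AddMonoid S] [LinearOrder S] : Prop :=
  ℵ₀ ≤ degree S ∧ ∃ a : (degree S).ord.ToType → S,
    (∀ i, 0 < a i) ∧ (∀ ε : S, 0 < ε → ∃ i, a i ≤ ε) ∧
    ∀ i j : (degree S).ord.ToType, j < i → ∀ n : ℕ, n • a i < a j

namespace PTOMaux
variable {S : Type} [AddMonoid S] [LinearOrder S]

theorem le_add_right (hS : IsPTOM S) (a b : S) : a ≤ a + b := by
  calc a = a + 0 := (add_zero a).symm
  _ ≤ a + b := hS.add_le_add _ _ _ _ le_rfl (hS.zero_le b)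

theorem nsmul_mono (hS : IsPTOM S) {a b : S} (h : a ≤ b) : ∀ n : ℕ, n • a ≤ n • b := by
  intro n
  induction n with
  | zero => simp
  | succ n ih => rw [succ_nsmul, succ_nsmul]; exact hS.add_le_add _ _ _ _ ih h

omit [LinearOrder S] in
theorem two_nsmul' (a : S) : 2 • a = a + a := by
  rw [show (2:ℕ) = 1 + 1 from rfl, add_nsmul, one_nsmul]

theorem nsmul_mono_nat (hS : IsPTOM S) (a : S) {m n : ℕ} (h : m ≤ n) : m • a ≤ n • a := by
  obtain ⟨k, rfl⟩ := Nat.exists_eq_add_of_le h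
  rw [add_nsmul]
  exact le_add_right hS _ _

/-- the index type for `degree` -/
instance degNonempty : Nonempty {A : Set S // (∀ a ∈ A, 0 < a) ∧ ∀ ε : S, 0 < ε → ∃ a ∈ A, a ≤ ε} :=
  ⟨⟨{a | 0 < a}, fun _ ha => ha, fun ε hε => ⟨ε, hε, le_rfl⟩⟩⟩

theorem degree_le {A : Set S} (h1 : ∀ a ∈ A, 0 < a) (h2 : ∀ ε : S, 0 < ε → ∃ a ∈ A, a ≤ ε) :
    degree S ≤ #A :=
  ciInf_le' _ (⟨A, h1, h2⟩ : {A : Set S // (∀ a ∈ A, 0 < a) ∧ ∀ ε : S, 0 < ε → ∃ a ∈ A, a ≤ ε})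

theorem exists_coinitial_card :
    ∃ A : Set S, (∀ a ∈ A, 0 < a) ∧ (∀ ε : S, 0 < ε → ∃ a ∈ A, a ≤ ε) ∧ #A = degree S := by
  have h := csInf_mem (Set.range_nonempty
    (fun A : {A : Set S // (∀ a ∈ A, 0 < a) ∧ ∀ ε : S, 0 < ε → ∃ a ∈ A, a ≤ ε} => #A.1))
  obtain ⟨⟨A, h1, h2⟩, hA⟩ := h
  exact ⟨A, h1, h2, hA⟩

theorem half (_hS : IsPTOM S) (hN1 : ¬ MonoidCase1 S) :
    ∀ c : S, 0 < c → ∃ b : S, 0 < b ∧ b + b < c := by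
  intro c hc
  by_contra h
  push_neg at h
  exact hN1 ⟨c, hc, fun b hb => h b hb⟩

theorem aleph0_le_degree (hS : IsPTOM S) (hN1 : ¬ MonoidCase1 S) : ℵ₀ ≤ degree S := by
  rw [degree]
  refine le_ciInf fun A => ?_
  by_contra hlt
  push_neg at hlt
  have hfin : A.1.Finite := lt_aleph0_iff_set_finite.1 hlt
  obtain ⟨p, hp⟩ := hS.exists_pos
  obtain ⟨a0, ha0, _⟩ := A.2.2 p hp
  obtain ⟨m, hmA, hmin⟩ := Set.exists_min_image A.1 id hfin ⟨a0, ha0⟩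
  obtain ⟨b, hb, hbb⟩ := half hS hN1 m (A.2.1 m hmA)
  obtain ⟨a, haA, hab⟩ := A.2.2 b hb
  have : m ≤ b := le_trans (hmin a haA) hab
  exact absurd (lt_of_le_of_lt (le_trans this (le_add_right hS b b)) hbb) (lt_irrefl m)

end PTOMaux

namespace PTOMaux
variable {S : Type} [AddMonoid S] [LinearOrder S]

theorem case2 (hS : IsPTOM S) (hN1 : ¬ MonoidCase1 S)
    (hC : ∃ w : S, 0 < w ∧ ∀ ε : S, 0 < ε → ∃ n : ℕ, w ≤ n • ε) : MonoidCase2 S := by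
  obtain ⟨w, hw, hwC⟩ := hC
  let f : {s : S // 0 < s} → {s : S // 0 < s} := fun p =>
    ⟨(half hS hN1 p.1 p.2).choose, (half hS hN1 p.1 p.2).choose_spec.1⟩
  let A : ℕ → {s : S // 0 < s} := fun n => f^[n] ⟨w, hw⟩
  let a : ℕ → S := fun n => (A n).1
  have apos : ∀ n, 0 < a n := fun n => (A n).2
  have hstep : ∀ n, a (n+1) + a (n+1) < a n := by
    intro n
    have h0 : A (n+1) = f (A n) := Function.iterate_succ_apply' f n _
    have h2 : a (n+1) = (f (A n)).1 := congrArg Subtype.val h0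
    rw [h2]
    exact (half hS hN1 (A n).1 (A n).2).choose_spec.2
  have hdec : ∀ n, a (n+1) ≤ a n := fun n => le_trans (le_add_right hS _ _) (hstep n).le
  have hanti : Antitone a := antitone_nat_of_succ_le hdec
  have hsdec : ∀ i j : ℕ, j < i → a i + a i < a j := by
    intro i j hji
    obtain ⟨m, rfl⟩ : ∃ m, i = m + 1 := ⟨i-1, (Nat.succ_pred_eq_of_pos (Nat.lt_of_le_of_lt (Nat.zero_le j) hji)).symm⟩
    exact lt_of_lt_of_le (hstep m) (hanti (Nat.lt_succ_iff.1 hji))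
  have ha0 : a 0 = w := rfl
  have key : ∀ i, 2 ^ (i+1) • a (i+1) < a 0 := by
    intro i
    induction i with
    | zero => rw [pow_one, two_nsmul']; exact hstep 0
    | succ i ih =>
      calc (2:ℕ) ^ (i+1+1) • a (i+1+1) = 2 ^ (i+1) • (2 • a (i+1+1)) := by
            rw [show (2:ℕ)^(i+1+1) = 2 * 2^(i+1) by ring, mul_nsmul]
      _ ≤ 2 ^ (i+1) • a (i+1) := nsmul_mono hS (by rw [two_nsmul']; exact (hstep (i+1)).le) _
      _ < a 0 := ih
  have hcoin : ∀ ε : S, 0 < ε → ∃ i, a i ≤ ε := by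
    intro ε hε
    by_contra h
    push_neg at h
    obtain ⟨n, hn⟩ := hwC ε hε
    have h1 : w ≤ n • a (n+1) := le_trans hn (nsmul_mono hS (h (n+1)).le n)
    have h2 : n • a (n+1) ≤ 2 ^ (n+1) • a (n+1) :=
      nsmul_mono_nat hS _ (le_trans (Nat.lt_two_pow_self (n := n)).le
        (Nat.pow_le_pow_right (by norm_num) (Nat.le_succ n)))
    exact absurd (lt_of_le_of_lt (le_trans h1 h2) (key n)) (lt_irrefl w).elim
  constructor
  · refine le_antisymm ?_ (aleph0_le_degree hS hN1)
    refine le_trans (degree_le (A := Set.range a) ?_ ?_) ?_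
    · rintro s ⟨i, rfl⟩; exact apos i
    · intro ε hε; obtain ⟨i, hi⟩ := hcoin ε hε; exact ⟨a i, ⟨i, rfl⟩, hi⟩
    · exact le_trans mk_range_le (by rw [Cardinal.mk_nat])
  · refine ⟨a, apos, hcoin, hsdec, ?_⟩
    intro i j hai _
    obtain ⟨n, hn⟩ := hwC (a i) hai
    exact ⟨n, le_trans (hanti (Nat.zero_le j)) hn⟩

theorem case3 (hS : IsPTOM S) (hN1 : ¬ MonoidCase1 S)
    (hNC : ∀ w : S, 0 < w → ∃ ε : S, 0 < ε ∧ ∀ n : ℕ, n • ε < w) : MonoidCase3 S := by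
  have hδ : ℵ₀ ≤ degree S := aleph0_le_degree hS hN1
  obtain ⟨A, hA1, hA2, hAcard⟩ := exists_coinitial_card (S := S)
  have hcardI : #((degree S).ord.ToType) = degree S := mk_ord_toType _
  obtain ⟨e⟩ := Cardinal.eq.1 (hcardI.trans hAcard.symm)
  set x : (degree S).ord.ToType → S := fun i => (e i).1 with hx
  have hxA : ∀ i, x i ∈ A := fun i => (e i).2
  have hxpos : ∀ i, 0 < x i := fun i => hA1 _ (hxA i)
  have hxsurj : ∀ s ∈ A, ∃ i, x i = s := fun s hs => ⟨e.symm ⟨s, hs⟩, by simp [hx]⟩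
  have key : ∀ (i : (degree S).ord.ToType) (g : ∀ j : (degree S).ord.ToType, j < i → S),
      ∃ b : S, 0 < b ∧ b ≤ x i ∧ ∀ (j) (h : j < i), 0 < g j h → ∀ n : ℕ, n • b < g j h := by
    intro i g
    set T : Set S := {s | 0 < s ∧ ∃ (j : (degree S).ord.ToType) (h : j < i), g j h = s} with hT
    have hTsub : T ⊆ Set.range (fun p : Set.Iio i => g p.1 p.2) := by
      rintro s ⟨hs, j, h, rfl⟩; exact ⟨⟨j, h⟩, rfl⟩
    have hTcard : #T < degree S :=
      lt_of_le_of_lt (le_trans (mk_le_mk_of_subset hTsub) mk_range_le) (mk_Iio_toType_ord_lt i)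
    have hTnotco : ¬ (∀ ε : S, 0 < ε → ∃ s ∈ T, s ≤ ε) := by
      intro hco
      exact absurd (degree_le (fun s hs => hs.1) hco) (not_le.2 hTcard)
    push_neg at hTnotco
    obtain ⟨ε, hε, hεT⟩ := hTnotco
    obtain ⟨b, hb, hbn⟩ := hNC (min ε (x i)) (lt_min hε (hxpos i))
    refine ⟨b, hb, ?_, ?_⟩
    · have := hbn 1
      rw [one_nsmul] at this
      exact le_trans this.le (min_le_right _ _)
    · intro j h hg n
      have h1 : n • b < ε := lt_of_lt_of_le (hbn n) (min_le_left _ _)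
      have h2 : ε < g j h := hεT (g j h) ⟨hg, j, h, rfl⟩
      exact h1.trans h2
  let a : (degree S).ord.ToType → S :=
    WellFounded.fix wellFounded_lt (fun i rec => (key i rec).choose)
  have haeq : ∀ i, a i = (key i (fun j _ => a j)).choose := fun i =>
    WellFounded.fix_eq _ _ i
  have hapos : ∀ i, 0 < a i := fun i => by rw [haeq i]; exact (key i _).choose_spec.1
  have halex : ∀ i, a i ≤ x i := fun i => by rw [haeq i]; exact (key i _).choose_spec.2.1
  have hadec : ∀ (i j : (degree S).ord.ToType), j < i → ∀ n : ℕ, n • a i < a j := by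
    intro i j h n
    have h5 := (key i (fun j _ => a j)).choose_spec.2.2 j h (hapos j) n
    rw [haeq i]; exact h5
  refine ⟨hδ, a, hapos, ?_, hadec⟩
  intro ε hε
  obtain ⟨s, hsA, hsε⟩ := hA2 ε hε
  obtain ⟨i, rfl⟩ := hxsurj s hsA
  exact ⟨i, le_trans (halex i) hsε⟩

theorem excl12 (_hS : IsPTOM S) (h1 : MonoidCase1 S) (h2 : MonoidCase2 S) : False := by
  obtain ⟨c, hc, hcb⟩ := h1
  obtain ⟨_, a, apos, acoin, asdec, _⟩ := h2
  obtain ⟨k, hk⟩ := acoin c hc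
  exact absurd (lt_of_lt_of_le (asdec (k+1) k (Nat.lt_succ_self k)) hk)
    (not_lt.2 (hcb (a (k+1)) (apos _)))

theorem excl13 (_hS : IsPTOM S) (h1 : MonoidCase1 S) (h3 : MonoidCase3 S) : False := by
  obtain ⟨c, hc, hcb⟩ := h1
  obtain ⟨hδ, a, apos, acoin, adec⟩ := h3
  haveI := Cardinal.noMaxOrder hδ
  obtain ⟨k, hk⟩ := acoin c hc
  obtain ⟨k', hk'⟩ := exists_gt k
  have h5 := adec k' k hk' 2
  rw [two_nsmul'] at h5
  exact absurd (lt_of_lt_of_le h5 hk) (not_lt.2 (hcb (a k') (apos _)))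

theorem excl23 (hS : IsPTOM S) (h2 : MonoidCase2 S) (h3 : MonoidCase3 S) : False := by
  obtain ⟨_, a, apos, acoin, asdec, aarch⟩ := h2
  obtain ⟨hδ, b, bpos, bcoin, bdec⟩ := h3
  haveI := Cardinal.noMaxOrder hδ
  obtain ⟨m, hm⟩ := bcoin (a 0) (apos 0)
  obtain ⟨m', hm'⟩ := exists_gt m
  obtain ⟨k, hk⟩ := acoin (b m') (bpos m')
  have hlt : ∀ n : ℕ, n • a k < a 0 := fun n =>
    lt_of_lt_of_le (lt_of_le_of_lt (nsmul_mono hS hk n) (bdec m' m hm' n)) hm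
  have hk0 : a k < a 0 := by have h5 := hlt 1; rwa [one_nsmul] at h5
  obtain ⟨n, hn⟩ := aarch k 0 (apos k) hk0
  exact absurd hn (not_le.2 (hlt n))

end PTOMaux

/-- for every positively totally ordered monoid `S`, exactly one of the three
cases holds. -/
theorem statement_15 (S : Type) [AddMonoid S] [LinearOrder S] (hS : IsPTOM S) :
    (MonoidCase1 S ∧ ¬ MonoidCase2 S ∧ ¬ MonoidCase3 S) ∨
    (¬ MonoidCase1 S ∧ MonoidCase2 S ∧ ¬ MonoidCase3 S) ∨
    (¬ MonoidCase1 S ∧ ¬ MonoidCase2 S ∧ MonoidCase3 S) := by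
  by_cases h1 : MonoidCase1 S
  · exact Or.inl ⟨h1, fun h2 => PTOMaux.excl12 hS h1 h2, fun h3 => PTOMaux.excl13 hS h1 h3⟩
  by_cases hC : ∃ w : S, 0 < w ∧ ∀ ε : S, 0 < ε → ∃ n : ℕ, w ≤ n • ε
  · have h2 := PTOMaux.case2 hS h1 hC
    exact Or.inr (Or.inl ⟨h1, h2, fun h3 => PTOMaux.excl23 hS h2 h3⟩)
  · push_neg at hC
    have h3 := PTOMaux.case3 hS h1 hC
    exact Or.inr (Or.inr ⟨h1, fun h2 => PTOMaux.excl23 hS h2 h3, h3⟩)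

end
end

section
/- Let S be a positively totally ordered monoid that is 0-continuous and has uncountable degree Deg(S). Then S is not initially Archimedean: for every a ∈ S⁺ there exist x, y ∈ S with 0 < x < y < a and n·x < y for all n ∈ ℕ. In particular, S is not Archimedean. -/
open Cardinal Set

noncomputable section

/-- `S` is `0`-continuous: its degree is infinite and `S⁺` contains a coinitial,
strongly decreasing sequence. -/
def ZeroContinuous (S : Type) [AddMonoid S] [LinearOrder S] : Prop :=
  ℵ₀ ≤ degree S ∧ ∃ (δ : Ordinal.{0}) (a : δ.ToType → S),
    (∀ i, 0 < a i) ∧ (∀ ε : S, 0 < ε → ∃ i, a i ≤ ε) ∧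
    ∀ i j : δ.ToType, j < i → a i + a i < a j

/-- every `0`-continuous positively totally ordered monoid of uncountable degree
is not initially Archimedean: below every positive `a` there are `0 < x < y < a` with
`n·x < y` for all `n`. In particular, `S` is not Archimedean. -/
theorem statement_16 (S : Type) [AddMonoid S] [LinearOrder S] (hS : IsPTOM S)
    (hzc : ZeroContinuous S) (hdeg : ℵ₀ < degree S) :
    (∀ a : S, 0 < a → ∃ x y : S, 0 < x ∧ x < y ∧ y < a ∧ ∀ n : ℕ, n • x < y) ∧
    ¬ (∀ x y : S, 0 < x → x < y → ∃ n : ℕ, y ≤ n • x) := by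

  obtain ⟨hinf, δ, a, hpos, hcoi, hdec⟩ := hzc
  have hself : ∀ s : S, s ≤ s + s := fun s => by
    simpa using hS.add_le_add s s 0 s le_rfl (hS.zero_le s)
  have hmono : ∀ i j : δ.ToType, i ≤ j → a j ≤ a i := by
    intro i j hij
    rcases eq_or_lt_of_le hij with rfl | h
    · exact le_rfl
    · exact ((hself (a j)).trans (hdec j i h).le)
  have hlt : ∀ i j : δ.ToType, i < j → a j < a i := fun i j h =>
    lt_of_le_of_lt (hself (a j)) (hdec j i h)
  have hsmul_le : ∀ (n : ℕ) (x y : S), x ≤ y → n • x ≤ n • y := by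
    intro n
    induction n with
    | zero => intro x y _; simp
    | succ n ih =>
      intro x y h
      rw [succ_nsmul, succ_nsmul]
      exact hS.add_le_add _ _ _ _ (ih x y h) h
  have hsmul_mono : ∀ (m n : ℕ) (x : S), m ≤ n → m • x ≤ n • x := by
    intro m n x h
    induction n with
    | zero => simp_all
    | succ n ih =>
      rcases Nat.le_succ_iff.mp h with h' | rfl
      · calc m • x ≤ n • x := ih h'
          _ ≤ n • x + x := by simpa using hS.add_le_add (n • x) (n • x) 0 x le_rfl (hS.zero_le x)
          _ = (n + 1) • x := (succ_nsmul x n).symm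
      · exact le_rfl
  have hnocof : ∀ j : ℕ → δ.ToType, ∃ m, ∀ k, j k < m := by
    intro j
    by_contra h
    push_neg at h
    have hsub : (∀ b ∈ Set.range (fun k => a (j k)), 0 < b) ∧
        ∀ ε : S, 0 < ε → ∃ b ∈ Set.range (fun k => a (j k)), b ≤ ε := by
      constructor
      · rintro b ⟨k, rfl⟩; exact hpos _
      · intro ε hε
        obtain ⟨i, hi⟩ := hcoi ε hε
        obtain ⟨k, hk⟩ := h i
        exact ⟨a (j k), ⟨k, rfl⟩, (hmono i (j k) hk).trans hi⟩
    have h1 : degree S ≤ #(Set.range fun k => a (j k)) :=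
      ciInf_le' (fun A : {A : Set S // (∀ b ∈ A, 0 < b) ∧ ∀ ε : S, 0 < ε → ∃ b ∈ A, b ≤ ε} =>
        #↥(A.1)) ⟨_, hsub⟩
    have h2 : #(Set.range fun k => a (j k)) ≤ ℵ₀ :=
      Cardinal.mk_range_le.trans (by simp)
    exact absurd hdeg (not_lt.mpr (h1.trans h2))
  have main : ∀ b : S, 0 < b → ∃ x y : S, 0 < x ∧ x < y ∧ y < b ∧ ∀ n : ℕ, n • x < y := by
    intro b hb
    obtain ⟨i₀, hi₀⟩ := hcoi b hb
    obtain ⟨i₁, hi₁⟩ := hnocof (fun _ => i₀)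
    let j : ℕ → δ.ToType := fun k => Nat.rec i₁ (fun _ p => (hnocof fun _ => p).choose) k
    have hjsucc : ∀ k, j k < j (k+1) := fun k => (hnocof fun _ => j k).choose_spec 0
    obtain ⟨m, hm⟩ := hnocof j
    have key : ∀ k, 2 ^ (k+1) • a (j (k+1)) < a (j 0) := by
      intro k
      induction k with
      | zero =>
        have := hdec (j 1) (j 0) (hjsucc 0)
        simpa [two_nsmul] using this
      | succ k ih =>
        have h1 : 2 • a (j (k+2)) ≤ a (j (k+1)) := by
          rw [two_nsmul]; exact (hdec _ _ (hjsucc (k+1))).le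
        calc 2 ^ (k+2) • a (j (k+2)) = 2 ^ (k+1) • (2 • a (j (k+2))) := by
              rw [← mul_nsmul]
              ring_nf
          _ ≤ 2 ^ (k+1) • a (j (k+1)) := hsmul_le _ _ _ h1
          _ < a (j 0) := ih
    refine ⟨a m, a (j 0), hpos m, hlt _ _ (hm 0), lt_of_lt_of_le (hlt i₀ i₁ (hi₁ 0)) hi₀, ?_⟩
    intro n
    have hn2 : n ≤ 2 ^ (n+1) :=
      (Nat.lt_two_pow_self (n := n)).le.trans (Nat.pow_le_pow_right (by norm_num) (Nat.le_succ n))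
    calc n • a m ≤ 2 ^ (n+1) • a m := hsmul_mono _ _ _ hn2
      _ ≤ 2 ^ (n+1) • a (j (n+1)) := hsmul_le _ _ _ (hlt _ _ (hm (n+1))).le
      _ < a (j 0) := key n
  refine ⟨main, ?_⟩
  intro h
  obtain ⟨b, hb⟩ := hS.exists_pos
  obtain ⟨x, y, hx, hxy, _, hn⟩ := main b hb
  obtain ⟨n, hn'⟩ := h x y hx hxy
  exact absurd hn' (not_le.mpr (hn n))

end
end

section
/- Let κ and λ be infinite cardinals with κ regular, and assume λ^{<κ} = λ < 𝔠 (this forces κ = ω). Then there exist a family 𝔐 of subsets of ᵏλ and a function μ : 𝔐 → [0, ∞], where [0, ∞] denotes the extended nonnegative real numbers with their usual addition and order, such that (ᵏλ, 𝔐, μ) is a continuous weak λ⁺-measure space which is ω₁-Dirac, i.e., supp(μ) is second countable. -/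
open Cardinal Set

noncomputable section

/-- `(X, M, μ)` is a weak `λ⁺`-measure space (with `lam` playing the role of `λ`):
`M` contains all open sets and is closed under unions of at most `lam` many sets,
and `μ` satisfies the axioms (M1)-(M5). -/
structure IsWeakMeasureSpace (X : Type) [TopologicalSpace X] (lam : Cardinal)
    (S : Type*) [AddMonoid S] [LinearOrder S] (M : Set (Set X)) (μ : Set X → S) : Prop where
  open_mem : ∀ U : Set X, IsOpen U → U ∈ M
  sUnion_mem : ∀ 𝒜 : Set (Set X), 𝒜 ⊆ M → #↥𝒜 ≤ lam → ⋃₀ 𝒜 ∈ M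
  measure_empty : μ ∅ = 0
  measure_univ_pos : 0 < μ Set.univ
  mono : ∀ A B : Set X, A ∈ M → B ∈ M → A ⊆ B → μ A ≤ μ B
  additive : ∀ (γ : Ordinal) (A : γ.ToType → Set X), γ.card ≤ lam →
    (∀ i, A i ∈ M) → Pairwise (Function.onFun Disjoint A) →
    IsLUB {s : S | ∃ F : Finset γ.ToType, s = finSum (fun i => μ (A i)) F} (μ (⋃ i, A i))
  point_reg : ∀ (x : X) (γ : Ordinal) (A : γ.ToType → Set X),
    {x} ∈ M → γ.card ≤ lam →
    (∀ i, IsOpen (A i) ∧ x ∈ A i) →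
    (∀ U : Set X, IsOpen U → x ∈ U → ∃ i, A i ⊆ U) →
    IsGLB (Set.range fun i => μ (A i)) (μ {x})

/-- The support of `μ`: the complement of the union of all open sets of measure `0`. -/
def msupp {X : Type} [TopologicalSpace X] {S : Type*} [Zero S] (μ : Set X → S) : Set X :=
  (⋃₀ {U : Set X | IsOpen U ∧ μ U = 0})ᶜ


open MeasureTheory

lemma finSum_eq_sum {ι : Type*} [LinearOrder ι] {S : Type*} [AddCommMonoid S] (f : ι → S)
    (F : Finset ι) : finSum f F = ∑ i ∈ F, f i := by
  unfold finSum
  rw [List.Perm.sum_eq ((F.sort_perm_toList (· ≤ ·)).map f), Finset.sum_map_toList]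

def natIso (κ : Cardinal.{0}) (h : κ = ℵ₀) : ℕ ≃o κ.ord.ToType := by
  have : @Ordinal.type ℕ (· < ·) isWellOrder_lt = @Ordinal.type κ.ord.ToType (· < ·) isWellOrder_lt := by
    rw [Ordinal.type_toType, h, Cardinal.ord_aleph0, Ordinal.type_nat_lt]
  exact OrderIso.ofRelIsoLT
    ((@Ordinal.type_eq ℕ κ.ord.ToType (· < ·) (· < ·) isWellOrder_lt isWellOrder_lt).mp this).some

lemma mk_iUnion_le_lam {X τ : Type} (lam : Cardinal.{0}) (hlam : ℵ₀ ≤ lam) (hτ : #τ ≤ lam)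
    (B : τ → Set X) (hB : ∀ i, #↥(B i) ≤ lam) : #↥(⋃ i, B i) ≤ lam := by
  calc #↥(⋃ i, B i) ≤ Cardinal.sum (fun i => #↥(B i)) := Cardinal.mk_iUnion_le_sum_mk
    _ ≤ Cardinal.sum (fun _ : τ => lam) := Cardinal.sum_le_sum _ _ hB
    _ = #τ * lam := Cardinal.sum_const' _ _
    _ ≤ lam * lam := mul_le_mul_left hτ lam
    _ = lam := Cardinal.mul_eq_self hlam

namespace S17

def dg (t : ℝ) (n : ℕ) : Bool := decide (1 ≤ 2 * Int.fract (t * 2 ^ n))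

lemma floor_two_mul (x : ℝ) : ⌊2 * x⌋ = 2 * ⌊x⌋ + (if 1 ≤ 2 * Int.fract x then 1 else 0) := by
  conv_lhs => rw [show (2:ℝ) * x = 2 * Int.fract x + (2 * ⌊x⌋ : ℤ) by
    push_cast [Int.fract]; ring]
  rw [Int.floor_add_intCast]
  have h0 : (0:ℝ) ≤ Int.fract x := Int.fract_nonneg x
  have h1 : Int.fract x < 1 := Int.fract_lt_one x
  by_cases h : 1 ≤ 2 * Int.fract x
  · rw [if_pos h]
    have : ⌊2 * Int.fract x⌋ = 1 := by
      have : ((1:ℤ):ℝ) ≤ 2 * Int.fract x ∧ 2 * Int.fract x < (1:ℤ) + 1 := by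
        constructor <;> push_cast <;> linarith
      exact Int.floor_eq_iff.2 this
    omega
  · rw [if_neg h]
    have : ⌊2 * Int.fract x⌋ = 0 := by
      have : ((0:ℤ):ℝ) ≤ 2 * Int.fract x ∧ 2 * Int.fract x < (0:ℤ) + 1 := by
        constructor <;> push_cast <;> linarith
      exact Int.floor_eq_iff.2 this
    omega

lemma floor_agree {t t' : ℝ} (ht : t ∈ Ioo (0:ℝ) 1) (ht' : t' ∈ Ioo (0:ℝ) 1) (N : ℕ)
    (h : ∀ n < N, dg t n = dg t' n) : ⌊t * 2 ^ N⌋ = ⌊t' * 2 ^ N⌋ := by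
  induction N with
  | zero =>
      simp only [pow_zero, mul_one]
      rw [Int.floor_eq_zero_iff.2 ⟨le_of_lt ht.1, ht.2⟩,
        Int.floor_eq_zero_iff.2 ⟨le_of_lt ht'.1, ht'.2⟩]
  | succ n ih =>
      have hd : dg t n = dg t' n := h n (Nat.lt_succ_self n)
      have := ih (fun m hm => h m (hm.trans (Nat.lt_succ_self n)))
      have e1 : t * 2 ^ (n+1) = 2 * (t * 2 ^ n) := by ring
      have e2 : t' * 2 ^ (n+1) = 2 * (t' * 2 ^ n) := by ring
      rw [e1, e2, floor_two_mul, floor_two_mul, this]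
      have : (1 ≤ 2 * Int.fract (t * 2 ^ n)) ↔ (1 ≤ 2 * Int.fract (t' * 2 ^ n)) := by
        have := congrArg (fun b => b = true) hd
        simpa [dg] using hd
      simp [this]

lemma dist_lt {t t' : ℝ} (ht : t ∈ Ioo (0:ℝ) 1) (ht' : t' ∈ Ioo (0:ℝ) 1) (N : ℕ)
    (h : ∀ n < N, dg t n = dg t' n) : |t - t'| < ((2:ℝ) ^ N)⁻¹ := by
  have hfl := floor_agree ht ht' N h
  have hp : (0:ℝ) < 2 ^ N := by positivity
  have h1 : (⌊t * 2 ^ N⌋ : ℝ) ≤ t * 2 ^ N := Int.floor_le _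
  have h2 : t * 2 ^ N < ⌊t * 2 ^ N⌋ + 1 := Int.lt_floor_add_one _
  have h3 : (⌊t' * 2 ^ N⌋ : ℝ) ≤ t' * 2 ^ N := Int.floor_le _
  have h4 : t' * 2 ^ N < ⌊t' * 2 ^ N⌋ + 1 := Int.lt_floor_add_one _
  rw [hfl] at h1 h2
  rw [abs_sub_lt_iff]
  constructor <;> [skip; skip] <;>
  · rw [show ((2:ℝ)^N)⁻¹ = 1 / 2^N by ring, lt_div_iff₀ hp]
    nlinarith


lemma volume_eq_zero_of_mk_lt {S : Set ℝ} (hm : MeasurableSet S) (hsub : S ⊆ Ioo 0 1)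
    (hcard : #S < Cardinal.continuum) : volume S = 0 := by
  by_contra h
  have hfin : volume S ≠ ⊤ := by
    refine ne_top_of_le_ne_top ?_ (measure_mono hsub)
    simp [Real.volume_Ioo]
  obtain ⟨K, hKS, hKc, hlt⟩ := hm.exists_isCompact_lt_add hfin (ε := volume S)
    (by simpa [pos_iff_ne_zero] using h)
  have hKpos : volume K ≠ 0 := by
    intro h0
    rw [h0, zero_add] at hlt
    exact absurd hlt (lt_irrefl _)
  have hKunc : ¬ K.Countable := fun hc => hKpos (hc.measure_zero _)
  obtain ⟨f, hrange, _, hinj⟩ := hKc.isClosed.exists_nat_bool_injection_of_not_countable hKunc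
  have : Cardinal.continuum ≤ #K := by
    have h1 : #(ℕ → Bool) ≤ #K := Cardinal.mk_le_of_injective
      (f := fun z => (⟨f z, hrange (mem_range_self z)⟩ : K)) (fun a b hab => hinj (Subtype.val_inj.2 hab))
    calc Cardinal.continuum = #(ℕ → Bool) := by
          rw [Cardinal.mk_arrow]; simp [Cardinal.two_power_aleph0]
      _ ≤ #K := h1
  exact absurd (this.trans (Cardinal.mk_le_mk_of_subset hKS)) (not_le.2 hcard)


variable {ι A : Type} [LinearOrder ι]

def cone (x : ι → A) (b : ι) : Set (GSeq ι A) := {y : GSeq ι A | ∀ i, i < b → y i = x i}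

def cones (ι A : Type) [LinearOrder ι] : Set (Set (GSeq ι A)) :=
  {C : Set (GSeq ι A) | ∃ (x : ι → A) (b : ι), C = {y : GSeq ι A | ∀ i, i < b → y i = x i}}

lemma isOpen_cone (x : ι → A) (b : ι) : IsOpen (cone x b) :=
  TopologicalSpace.isOpen_generateFrom_of_mem ⟨x, b, rfl⟩

lemma mem_cone_self (x : ι → A) (b : ι) : x ∈ cone x b := fun _ _ => rfl

variable (e : ℕ ≃o ι) (a0 a1 : A)

lemma lt_e_zero (i : ι) : ¬ i < e 0 := by
  have : e 0 ≤ e (e.symm i) := e.monotone (Nat.zero_le _)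
  simp only [OrderIso.apply_symm_apply] at this
  exact not_lt.2 this

include e in
lemma basis : TopologicalSpace.IsTopologicalBasis (cones ι A) := by
  refine ⟨?_, ?_, rfl⟩
  · rintro t₁ ⟨x₁, b₁, rfl⟩ t₂ ⟨x₂, b₂, rfl⟩ y ⟨h₁, h₂⟩
    refine ⟨cone y (max b₁ b₂), ⟨y, max b₁ b₂, rfl⟩, fun i _ => rfl, fun z hz => ⟨?_, ?_⟩⟩
    · intro i hi; rw [hz i (lt_of_lt_of_le hi (le_max_left _ _))]; exact h₁ i hi
    · intro i hi; rw [hz i (lt_of_lt_of_le hi (le_max_right _ _))]; exact h₂ i hi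
  · refine sUnion_eq_univ_iff.2 fun y => ⟨cone y (e 0), ⟨y, e 0, rfl⟩, fun i hi => ?_⟩
    exact absurd hi (lt_e_zero e i)

/-- the binary letter map -/
def ii : Bool → A := fun b => bif b then a1 else a0

lemma ii_mem (b : Bool) : ii a0 a1 b = a0 ∨ ii a0 a1 b = a1 := by
  cases b <;> simp [ii]

lemma ii_inj (hA : a0 ≠ a1) : Function.Injective (ii a0 a1) := by
  intro b b' h
  cases b <;> cases b' <;> simp [ii] at h ⊢
  · exact absurd h hA
  · exact absurd h.symm hA

/-- the embedding of `(0,1)` into the generalized Baire space via binary digits -/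
def fmap : ℝ → GSeq ι A := fun t i => ii a0 a1 (dg t (e.symm i))

/-- binary cone -/
def bcone (s : List Bool) : Set (GSeq ι A) :=
  cone (fun i => ii a0 a1 (s.getD (e.symm i) false)) (e s.length)

lemma isOpen_bcone (s : List Bool) : IsOpen (bcone e a0 a1 s) := isOpen_cone _ _

lemma bcone_nonempty (s : List Bool) : (bcone e a0 a1 s).Nonempty :=
  ⟨_, mem_cone_self _ _⟩

lemma mem_bcone_iff (hA : a0 ≠ a1) (t : ℝ) (s : List Bool) :
    fmap e a0 a1 t ∈ bcone e a0 a1 s ↔ ∀ n < s.length, dg t n = s.getD n false := by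
  constructor
  · intro h n hn
    have hlt : e n < e s.length := by exact e.lt_iff_lt.2 hn
    have := h (e n) hlt
    simp only [fmap, OrderIso.symm_apply_apply] at this
    exact ii_inj a0 a1 hA this
  · intro h i hi
    have hn : e.symm i < s.length := by
      have := e.symm.lt_iff_lt.2 hi
      simpa using this
    simp only [fmap]
    rw [h (e.symm i) hn]

/-- the digits of `t` as a list -/
def dl (t : ℝ) (N : ℕ) : List Bool := (List.range N).map (dg t)

lemma dl_length (t : ℝ) (N : ℕ) : (dl t N).length = N := by simp [dl]

lemma dl_getD (t : ℝ) (N n : ℕ) (hn : n < N) : (dl t N).getD n false = dg t n := by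
  rw [List.getD_eq_getElem _ _ (by simpa [dl] using hn)]
  simp [dl]


/-- pointwise basis lemma -/
lemma pointwise (hA : a0 ≠ a1) {U : Set (GSeq ι A)} (hU : IsOpen U) {t : ℝ}
    (hmem : fmap e a0 a1 t ∈ U) :
    ∃ s : List Bool, fmap e a0 a1 t ∈ bcone e a0 a1 s ∧ bcone e a0 a1 s ⊆ U := by
  obtain ⟨C, hC, htC, hCU⟩ := (basis (A := A) e).isOpen_iff.1 hU _ hmem
  obtain ⟨x, b, rfl⟩ := hC
  set N := e.symm b with hN
  have heb : e N = b := e.apply_symm_apply b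
  refine ⟨dl t N, ?_, ?_⟩
  · rw [mem_bcone_iff e a0 a1 hA]
    intro n hn
    rw [dl_getD t N n (by simpa [dl_length] using hn)]
  · intro y hy
    apply hCU
    intro i hi
    have hiN : i < e N := heb ▸ hi
    have hn : e.symm i < N := by simpa using e.symm.lt_iff_lt.2 hiN
    have h1 := hy i (by rwa [dl_length, heb])
    simp only at h1
    rw [dl_getD t N _ hn] at h1
    have h2 : fmap e a0 a1 t i = x i := htC i hi
    rw [h1, ← h2]; rfl

lemma meas_dg_set (n : ℕ) (b : Bool) : MeasurableSet {t : ℝ | dg t n = b} := by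
  have hm : Measurable fun t : ℝ => 2 * Int.fract (t * 2 ^ n) :=
    (measurable_fract.comp (measurable_id.mul_const _)).const_mul 2
  have h1 : MeasurableSet {t : ℝ | 1 ≤ 2 * Int.fract (t * 2 ^ n)} := hm measurableSet_Ici
  cases b
  · have : {t : ℝ | dg t n = false} = {t : ℝ | 1 ≤ 2 * Int.fract (t * 2 ^ n)}ᶜ := by
      ext t; simp [dg, decide_eq_false_iff_not]
    rw [this]; exact h1.compl
  · have : {t : ℝ | dg t n = true} = {t : ℝ | 1 ≤ 2 * Int.fract (t * 2 ^ n)} := by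
      ext t; simp [dg, decide_eq_true_eq]
    rw [this]; exact h1

lemma meas_bcone (hA : a0 ≠ a1) (s : List Bool) :
    MeasurableSet (fmap e a0 a1 ⁻¹' (bcone e a0 a1 s) ∩ Ioo (0:ℝ) 1) := by
  have : fmap e a0 a1 ⁻¹' (bcone e a0 a1 s) = ⋂ n ∈ Finset.range s.length,
      {t : ℝ | dg t n = s.getD n false} := by
    ext t
    simp only [mem_preimage, mem_iInter, Finset.mem_range, mem_setOf_eq]
    exact mem_bcone_iff e a0 a1 hA t s
  rw [this]
  exact (MeasurableSet.biInter (Finset.range s.length).countable_toSet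
    fun n _ => meas_dg_set n _).inter measurableSet_Ioo

lemma open_decomp (hA : a0 ≠ a1) {U : Set (GSeq ι A)} (hU : IsOpen U) :
    fmap e a0 a1 ⁻¹' U ∩ Ioo (0:ℝ) 1 =
      ⋃ (s : List Bool) (_ : bcone e a0 a1 s ⊆ U), (fmap e a0 a1 ⁻¹' (bcone e a0 a1 s) ∩ Ioo (0:ℝ) 1) := by
  ext t
  simp only [mem_inter_iff, mem_preimage, mem_iUnion, exists_prop]
  constructor
  · rintro ⟨h1, h2⟩
    obtain ⟨s, hs1, hs2⟩ := pointwise e a0 a1 hA hU h1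
    exact ⟨s, hs2, hs1, h2⟩
  · rintro ⟨s, hsU, h1, h2⟩
    exact ⟨hsU h1, h2⟩

lemma meas_open (hA : a0 ≠ a1) {U : Set (GSeq ι A)} (hU : IsOpen U) :
    MeasurableSet (fmap e a0 a1 ⁻¹' U ∩ Ioo (0:ℝ) 1) := by
  rw [open_decomp e a0 a1 hA hU]
  exact MeasurableSet.biUnion (to_countable _) fun s _ => meas_bcone e a0 a1 hA s

/-- the premeasure -/
def nu : Set (GSeq ι A) → ENNReal := fun V => volume (fmap e a0 a1 ⁻¹' V ∩ Ioo (0:ℝ) 1)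

lemma nu_empty : nu e a0 a1 (∅ : Set (GSeq ι A)) = 0 := by simp [nu]

lemma nu_univ : nu e a0 a1 (univ : Set (GSeq ι A)) = 1 := by simp [nu, Real.volume_Ioo]

lemma nu_mono {V W : Set (GSeq ι A)} (h : V ⊆ W) : nu e a0 a1 V ≤ nu e a0 a1 W :=
  measure_mono (inter_subset_inter_left _ (preimage_mono h))

lemma fmap_injOn (hA : a0 ≠ a1) : InjOn (fmap e a0 a1) (Ioo (0:ℝ) 1) := by
  intro t ht t' ht' hf
  have hdg : ∀ n, dg t n = dg t' n := by
    intro n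
    have := congrFun hf (e n)
    simp only [fmap, OrderIso.symm_apply_apply] at this
    exact ii_inj a0 a1 hA this
  by_contra hne
  have habs : 0 < |t - t'| := abs_pos.2 (sub_ne_zero.2 hne)
  obtain ⟨N, hN⟩ := pow_unbounded_of_one_lt |t - t'|⁻¹ (by norm_num : (1:ℝ) < 2)
  have h1 : ((2:ℝ) ^ N)⁻¹ < |t - t'| := by
    rw [inv_lt_comm₀ (by positivity) habs]
    exact hN
  exact absurd (dist_lt ht ht' N fun n _ => hdg n) (not_lt.2 h1.le)
lemma nu_cone_le (hA : a0 ≠ a1) (x : ι → A) (N : ℕ) :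
    nu e a0 a1 (cone x (e N)) ≤ ENNReal.ofReal (2 * ((2:ℝ) ^ N)⁻¹) := by
  rcases eq_empty_or_nonempty (fmap e a0 a1 ⁻¹' (cone x (e N)) ∩ Ioo (0:ℝ) 1) with h | ⟨t₀, ht₀⟩
  · rw [nu, h, measure_empty]; exact zero_le
  · have hsub : fmap e a0 a1 ⁻¹' (cone x (e N)) ∩ Ioo (0:ℝ) 1 ⊆
        Ioo (t₀ - ((2:ℝ)^N)⁻¹) (t₀ + ((2:ℝ)^N)⁻¹) := by
      rintro t ⟨ht1, ht2⟩
      have hdg : ∀ n < N, dg t n = dg t₀ n := by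
        intro n hn
        have hen : e n < e N := e.lt_iff_lt.2 hn
        have h1 : fmap e a0 a1 t (e n) = x (e n) := ht1 (e n) hen
        have h2 : fmap e a0 a1 t₀ (e n) = x (e n) := ht₀.1 (e n) hen
        have := h1.trans h2.symm
        simp only [fmap, OrderIso.symm_apply_apply] at this
        exact ii_inj a0 a1 hA this
      have := dist_lt ht2 ht₀.2 N hdg
      rw [abs_sub_lt_iff] at this
      constructor <;> linarith [this.1, this.2]
    calc nu e a0 a1 (cone x (e N)) ≤ volume (Ioo (t₀ - ((2:ℝ)^N)⁻¹) (t₀ + ((2:ℝ)^N)⁻¹)) :=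
          measure_mono hsub
      _ = ENNReal.ofReal (2 * ((2:ℝ)^N)⁻¹) := by rw [Real.volume_Ioo]; ring_nf

lemma nu_le_of_diff_small (hA : a0 ≠ a1) {lam : Cardinal} (hc : lam < Cardinal.continuum)
    {U V : Set (GSeq ι A)} (hU : IsOpen U) (hV : IsOpen V) (hd : #↥(U \ V) ≤ lam) :
    nu e a0 a1 U ≤ nu e a0 a1 V := by
  set S := (fmap e a0 a1 ⁻¹' U ∩ Ioo (0:ℝ) 1) \ (fmap e a0 a1 ⁻¹' V ∩ Ioo (0:ℝ) 1) with hS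
  have hmS : MeasurableSet S := (meas_open e a0 a1 hA hU).diff (meas_open e a0 a1 hA hV)
  have hSsub : S ⊆ Ioo (0:ℝ) 1 := fun t ht => ht.1.2
  have hcard : #↥S < Cardinal.continuum := by
    refine lt_of_le_of_lt ?_ (lt_of_le_of_lt hd hc)
    have hinj : ∀ t (ht : t ∈ S), fmap e a0 a1 t ∈ U \ V := by
      rintro t ⟨⟨h1, h2⟩, h3⟩
      exact ⟨h1, fun hv => h3 ⟨hv, h2⟩⟩
    refine Cardinal.mk_le_of_injective (f := fun t : S => (⟨fmap e a0 a1 t.1, hinj t.1 t.2⟩ : ↥(U \ V))) ?_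
    rintro ⟨t, ht⟩ ⟨t', ht'⟩ h
    have := fmap_injOn e a0 a1 hA (hSsub ht) (hSsub ht') (Subtype.mk_eq_mk.1 h)
    exact Subtype.mk_eq_mk.2 this
  have hvol : volume S = 0 := volume_eq_zero_of_mk_lt hmS hSsub hcard
  calc nu e a0 a1 U = volume (fmap e a0 a1 ⁻¹' U ∩ Ioo (0:ℝ) 1) := rfl
    _ ≤ volume ((fmap e a0 a1 ⁻¹' V ∩ Ioo (0:ℝ) 1) ∪ S) := measure_mono (fun t ht => by
        by_cases h : t ∈ fmap e a0 a1 ⁻¹' V ∩ Ioo (0:ℝ) 1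
        · exact Or.inl h
        · exact Or.inr ⟨ht, h⟩)
    _ ≤ volume (fmap e a0 a1 ⁻¹' V ∩ Ioo (0:ℝ) 1) + volume S := measure_union_le _ _
    _ = nu e a0 a1 V := by rw [hvol, add_zero]; rfl

variable (lam : Cardinal)

/-- the measure -/
def mu : Set (GSeq ι A) → ENNReal := fun E =>
  ⨅ (V : Set (GSeq ι A)) (_ : IsOpen V ∧ #↥(E \ V) ≤ lam), nu e a0 a1 V

lemma mu_le_nu {E V : Set (GSeq ι A)} (hV : IsOpen V) (h : #↥(E \ V) ≤ lam) :
    mu e a0 a1 lam E ≤ nu e a0 a1 V := iInf₂_le V ⟨hV, h⟩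

lemma mu_mono {E F : Set (GSeq ι A)} (h : E ⊆ F) : mu e a0 a1 lam E ≤ mu e a0 a1 lam F := by
  refine le_iInf₂ fun V hV => ?_
  exact mu_le_nu e a0 a1 lam hV.1 (le_trans (Cardinal.mk_le_mk_of_subset (diff_subset_diff_left h)) hV.2)

lemma mu_union_small (hA : a0 ≠ a1) (hc : lam < Cardinal.continuum)
    {U B : Set (GSeq ι A)} (hU : IsOpen U) (hB : #↥B ≤ lam) :
    mu e a0 a1 lam (U ∪ B) = nu e a0 a1 U := by
  apply le_antisymm
  · exact mu_le_nu e a0 a1 lam hU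
      (le_trans (Cardinal.mk_le_mk_of_subset (by intro y hy; exact (union_diff_left ▸ hy : y ∈ B \ U).1)) hB)
  · refine le_iInf₂ fun V hV => ?_
    refine nu_le_of_diff_small e a0 a1 hA hc hU hV.1 (le_trans ?_ hV.2)
    exact Cardinal.mk_le_mk_of_subset (diff_subset_diff_left subset_union_left)

lemma mu_small (hA : a0 ≠ a1) (hc : lam < Cardinal.continuum) {B : Set (GSeq ι A)}
    (hB : #↥B ≤ lam) : mu e a0 a1 lam B = 0 := by
  have := mu_union_small e a0 a1 lam hA hc isOpen_empty hB
  rw [empty_union] at this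
  rw [this, nu_empty]
/-- the measurable family -/
def MM : Set (Set (GSeq ι A)) :=
  {E | ∃ U B : Set (GSeq ι A), IsOpen U ∧ #↥B ≤ lam ∧ E = U ∪ B}

lemma mu_additive (hA : a0 ≠ a1) (hlam : ℵ₀ ≤ lam) (hc : lam < Cardinal.continuum)
    (γ : Ordinal.{0}) (Aset : γ.ToType → Set (GSeq ι A)) (hγ : γ.card ≤ lam)
    (hmem : ∀ i, Aset i ∈ MM (A := A) (ι := ι) lam) (hdisj : Pairwise (Function.onFun Disjoint Aset)) :
    mu e a0 a1 lam (⋃ i, Aset i) = ∑' i, mu e a0 a1 lam (Aset i) := by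
  choose U B hU hB hEq using hmem
  have hUsub : ∀ i, U i ⊆ Aset i := fun i => (hEq i) ▸ subset_union_left
  have hUdisj : Pairwise (Function.onFun Disjoint U) := fun i j hij =>
    ((hdisj hij).mono (hUsub i) (hUsub j))
  have hBU : #↥(⋃ i, B i) ≤ lam := by
    calc #↥(⋃ i, B i) ≤ Cardinal.sum (fun i => #↥(B i)) := Cardinal.mk_iUnion_le_sum_mk
      _ ≤ Cardinal.sum (fun _ : γ.ToType => lam) := Cardinal.sum_le_sum _ _ hB
      _ = #(γ.ToType) * lam := Cardinal.sum_const' _ _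
      _ ≤ lam * lam := by
          rw [Cardinal.mk_toType]
          exact mul_le_mul_left hγ lam
      _ = lam := Cardinal.mul_eq_self hlam
  have hUnion : (⋃ i, Aset i) = (⋃ i, U i) ∪ (⋃ i, B i) := by
    simp only [hEq]; rw [iUnion_union_distrib]
  have h1 : mu e a0 a1 lam (⋃ i, Aset i) = nu e a0 a1 (⋃ i, U i) := by
    rw [hUnion]
    exact mu_union_small e a0 a1 lam hA hc (isOpen_iUnion hU) hBU
  have h2 : ∀ i, mu e a0 a1 lam (Aset i) = nu e a0 a1 (U i) := fun i => by
    rw [hEq i]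
    exact mu_union_small e a0 a1 lam hA hc (hU i) (hB i)
  set g : γ.ToType → Set ℝ := fun i => fmap e a0 a1 ⁻¹' (U i) ∩ Ioo (0:ℝ) 1 with hg
  have hgm : ∀ i, MeasurableSet (g i) := fun i => meas_open e a0 a1 hA (hU i)
  have hgd : Pairwise (Function.onFun Disjoint g) := by
    intro i j hij
    exact ((hUdisj hij).preimage (fmap e a0 a1)).mono inter_subset_left inter_subset_left
  set I0 : Set γ.ToType := {i | (g i).Nonempty} with hI0def
  have hsel : ∀ i : I0, ∃ s : List Bool, bcone e a0 a1 s ⊆ U i.1 := by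
    rintro ⟨i, t, ht⟩
    obtain ⟨s, _, hs2⟩ := pointwise e a0 a1 hA (hU i) ht.1
    exact ⟨s, hs2⟩
  choose ψ hψ using hsel
  have hψinj : Function.Injective ψ := by
    rintro i j h
    by_contra hne
    have hij : i.1 ≠ j.1 := fun h' => hne (Subtype.ext h')
    obtain ⟨y, hy⟩ := bcone_nonempty e a0 a1 (ψ i)
    exact (hUdisj hij).le_bot ⟨hψ i hy, hψ j (h ▸ hy)⟩
  haveI : Countable ↥I0 := hψinj.countable
  have hcover : (⋃ i, g i) = ⋃ i : I0, g i.1 := by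
    ext t
    simp only [mem_iUnion]
    exact ⟨fun ⟨i, hi⟩ => ⟨⟨i, ⟨t, hi⟩⟩, hi⟩, fun ⟨i, hi⟩ => ⟨i.1, hi⟩⟩
  have hvol : nu e a0 a1 (⋃ i, U i) = ∑' i, nu e a0 a1 (U i) := by
    have hpre : fmap e a0 a1 ⁻¹' (⋃ i, U i) ∩ Ioo (0:ℝ) 1 = ⋃ i, g i := by
      rw [preimage_iUnion, iUnion_inter]
    have e1 : nu e a0 a1 (⋃ i, U i) = volume (⋃ i : I0, g i.1) := by
      rw [nu, hpre, hcover]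
    have e2 : volume (⋃ i : I0, g i.1) = ∑' i : I0, volume (g i.1) :=
      measure_iUnion (fun i j hij => hgd (fun h => hij (Subtype.ext h))) (fun i => hgm i.1)
    have e3 : ∑' i : I0, volume (g i.1) = ∑' i, volume (g i) := by
      refine tsum_subtype_eq_of_support_subset (f := fun i => volume (g i)) (s := I0) fun i hi => ?_
      by_contra hmem'
      have : g i = ∅ := not_nonempty_iff_eq_empty.1 hmem'
      simp [Function.mem_support, this] at hi
    rw [e1, e2, e3]; rfl
  rw [h1, hvol]
  exact tsum_congr fun i => (h2 i).symm
lemma glb_zero (b : ENNReal) (h : ∀ N : ℕ, b ≤ ENNReal.ofReal (2 * ((2:ℝ) ^ N)⁻¹)) : b = 0 := by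
  refine le_antisymm ?_ zero_le
  have hreal : Filter.Tendsto (fun N : ℕ => 2 * ((2:ℝ) ^ N)⁻¹) Filter.atTop (nhds 0) := by
    have : Filter.Tendsto (fun N : ℕ => ((2:ℝ)⁻¹) ^ N) Filter.atTop (nhds 0) :=
      tendsto_pow_atTop_nhds_zero_of_lt_one (by norm_num) (by norm_num)
    have := this.const_mul 2
    simpa [inv_pow] using this
  have : Filter.Tendsto (fun N : ℕ => ENNReal.ofReal (2 * ((2:ℝ) ^ N)⁻¹)) Filter.atTop (nhds 0) := by
    have := (ENNReal.continuous_ofReal.tendsto 0).comp hreal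
    rw [ENNReal.ofReal_zero] at this; exact this
  exact ge_of_tendsto' this h

lemma mu_le_nu_self {V : Set (GSeq ι A)} (hV : IsOpen V) : mu e a0 a1 lam V ≤ nu e a0 a1 V := by
  refine mu_le_nu e a0 a1 lam hV ?_
  simp

/-- the binary sequences -/
def C2 : Set (GSeq ι A) := {y | ∀ i, y i = a0 ∨ y i = a1}

lemma mu_cone_nonbinary (x : ι → A) (i0 : ι) (h0 : x i0 ≠ a0) (h1 : x i0 ≠ a1) :
    mu e a0 a1 lam (cone x (e (e.symm i0 + 1))) = 0 := by
  refine le_antisymm ?_ zero_le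
  refine le_trans (mu_le_nu_self e a0 a1 lam (isOpen_cone _ _)) (le_of_eq ?_)
  have hpre : fmap e a0 a1 ⁻¹' (cone x (e (e.symm i0 + 1))) = ∅ := by
    rw [eq_empty_iff_forall_notMem]
    intro t ht
    have hi0 : i0 < e (e.symm i0 + 1) := by
      conv_lhs => rw [← e.apply_symm_apply i0]
      exact e.lt_iff_lt.2 (Nat.lt_succ_self _)
    have := ht i0 hi0
    rcases ii_mem a0 a1 (dg t (e.symm i0)) with h | h
    · exact h0 (by rw [← this]; exact h)
    · exact h1 (by rw [← this]; exact h)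
  rw [nu, hpre]
  simp

include e in
lemma secondCountable_of_sub_C2 (S : Set (GSeq ι A)) (hS : S ⊆ C2 a0 a1) :
    SecondCountableTopology ↥S := by
  classical
  have hb := basis (A := A) e
  have hind : Topology.IsInducing (Subtype.val : ↥S → GSeq ι A) := Topology.IsInducing.subtypeVal
  have hbs := hb.isInducing hind
  refine hbs.secondCountableTopology ?_
  refine Countable.mono ?_ (Set.Countable.insert ∅
    (countable_range fun s : List Bool => (Subtype.val : ↥S → GSeq ι A) ⁻¹' (bcone e a0 a1 s)))
  rintro _ ⟨C, ⟨x, b, rfl⟩, rfl⟩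
  by_cases hbin : ∀ i < b, x i = a0 ∨ x i = a1
  · right
    set N := e.symm b with hN
    have heb : e N = b := e.apply_symm_apply b
    refine ⟨(List.range N).map (fun n => decide (x (e n) = a1)), ?_⟩
    have hcone : bcone e a0 a1 ((List.range N).map (fun n => decide (x (e n) = a1)))
        = {y : GSeq ι A | ∀ i, i < b → y i = x i} := by
      have hlen : ((List.range N).map (fun n => decide (x (e n) = a1))).length = N := by simp
      unfold bcone cone
      rw [hlen, heb]
      ext y
      refine forall_congr' fun i => imp_congr_right fun hi => ?_
      have hn : e.symm i < N := by simpa [hN] using e.symm.lt_iff_lt.2 (heb ▸ hi)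
      have hgetD : ((List.range N).map (fun n => decide (x (e n) = a1))).getD (e.symm i) false
          = decide (x i = a1) := by
        rw [List.getD_eq_getElem _ _ (by simpa using hn)]
        simp
      have hii : ii a0 a1 (decide (x i = a1)) = x i := by
        by_cases hxa : x i = a1
        · simp [ii, hxa]
        · have hx0 := (hbin i hi).resolve_right hxa
          rw [decide_eq_false hxa]
          simpa [ii] using hx0.symm
      simp only [hgetD, hii]
    exact congrArg (fun T => (Subtype.val : ↥S → GSeq ι A) ⁻¹' T) hcone
  · left
    rw [eq_empty_iff_forall_notMem]
    rintro ⟨y, hy⟩ hmem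
    push_neg at hbin
    obtain ⟨i, hi, hx0, hx1⟩ := hbin
    have := hmem i hi
    rcases hS hy i with h | h
    · exact hx0 (by rw [← this]; exact h)
    · exact hx1 (by rw [← this]; exact h)
end S17


/-- if `κ` is regular, `λ` infinite, `λ^{<κ} = λ < 𝔠`, then there is a
continuous, `ω₁`-Dirac weak `λ⁺`-measure space on `ᵏλ` with values in the extended
nonnegative reals `[0, ∞]`. -/
theorem statement_17 (κ lam : Cardinal) (hκ : κ.IsRegular) (hlam : ℵ₀ ≤ lam)
    (hpow : lam ^< κ = lam) (hc : lam < Cardinal.continuum) :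
    ∃ (M : Set (Set (GSeq κ.ord.ToType lam.ord.ToType)))
      (μ : Set (GSeq κ.ord.ToType lam.ord.ToType) → ENNReal),
      IsWeakMeasureSpace (GSeq κ.ord.ToType lam.ord.ToType) lam ENNReal M μ ∧
      MeasureContinuous M μ ∧
      SecondCountableTopology ↥(msupp μ) := by
  classical
  have hκω : κ = ℵ₀ := by
    refine le_antisymm ?_ hκ.aleph0_le
    by_contra h
    push_neg at h
    have h2 : (2:Cardinal) ≤ lam := le_trans (by exact_mod_cast Cardinal.nat_lt_aleph0 2 |>.le) hlam
    have hcle : Cardinal.continuum ≤ lam := by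
      calc Cardinal.continuum = 2 ^ ℵ₀ := Cardinal.two_power_aleph0.symm
        _ ≤ lam ^ ℵ₀ := Cardinal.power_le_power_right h2
        _ ≤ lam ^< κ := Cardinal.le_powerlt lam h
        _ = lam := hpow
    exact absurd hc (not_lt.2 hcle)
  have e : ℕ ≃o κ.ord.ToType := natIso κ hκω
  have hA2 : Nontrivial lam.ord.ToType := by
    rw [← Cardinal.one_lt_iff_nontrivial, Cardinal.mk_ord_toType]
    exact lt_of_lt_of_le Cardinal.one_lt_aleph0 hlam
  obtain ⟨a0, a1, hA⟩ := hA2.exists_pair_ne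
  have h1lam : (1:Cardinal) ≤ lam := le_trans Cardinal.one_le_aleph0 hlam
  have hsing : ∀ x : GSeq κ.ord.ToType lam.ord.ToType, #↥({x} : Set _) ≤ lam := by
    intro x
    rw [Cardinal.mk_singleton]
    exact h1lam
  refine ⟨S17.MM lam, S17.mu e a0 a1 lam, ⟨?_, ?_, ?_, ?_, ?_, ?_, ?_⟩, ?_, ?_⟩
  · -- open_mem
    intro U hU
    exact ⟨U, ∅, hU, by simp, (union_empty U).symm⟩
  · -- sUnion_mem
    intro 𝒜 h𝒜 hcard
    rw [sUnion_eq_iUnion]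
    choose U B hU hB hEq using fun a : ↥𝒜 => h𝒜 a.2
    refine ⟨⋃ a, U a, ⋃ a, B a, isOpen_iUnion hU,
      mk_iUnion_le_lam lam hlam hcard B hB, ?_⟩
    rw [← iUnion_union_distrib]
    exact iUnion_congr hEq
  · -- measure_empty
    exact S17.mu_small e a0 a1 lam hA hc (by simp)
  · -- measure_univ_pos
    have huniv : S17.mu e a0 a1 lam univ = 1 := by
      have h := S17.mu_union_small e a0 a1 lam hA hc (U := univ) (B := (∅ : Set _))
        isOpen_univ (by simp)
      rw [union_empty] at h
      rw [h, S17.nu_univ]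
    rw [huniv]
    norm_num
  · -- mono
    intro E F _ _ hEF
    exact S17.mu_mono e a0 a1 lam hEF
  · -- additive
    intro γ Aset hγ hmem hdisj
    have htsum := S17.mu_additive e a0 a1 lam hA hlam hc γ Aset hγ hmem hdisj
    have hset : {s : ENNReal | ∃ F : Finset γ.ToType,
        s = finSum (fun i => S17.mu e a0 a1 lam (Aset i)) F}
        = Set.range (fun F : Finset γ.ToType => ∑ i ∈ F, S17.mu e a0 a1 lam (Aset i)) := by
      ext u
      simp only [Set.mem_setOf_eq, Set.mem_range]
      constructor
      · rintro ⟨F, rfl⟩; exact ⟨F, (finSum_eq_sum _ _).symm⟩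
      · rintro ⟨F, rfl⟩; exact ⟨F, (finSum_eq_sum _ _).symm⟩
    rw [hset, htsum, ENNReal.tsum_eq_iSup_sum]
    exact isLUB_iSup
  · -- point_reg
    intro x γ Aset _ _ hopen hbasis
    have hμx : S17.mu e a0 a1 lam {x} = 0 := S17.mu_small e a0 a1 lam hA hc (hsing x)
    rw [hμx]
    constructor
    · rintro _ ⟨i, rfl⟩
      exact zero_le
    · intro b hb
      have key : ∀ N : ℕ, b ≤ ENNReal.ofReal (2 * ((2:ℝ) ^ N)⁻¹) := by
        intro N
        obtain ⟨i, hi⟩ := hbasis (S17.cone x (e N)) (S17.isOpen_cone x (e N))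
          (S17.mem_cone_self x (e N))
        calc b ≤ S17.mu e a0 a1 lam (Aset i) := hb ⟨i, rfl⟩
          _ ≤ S17.mu e a0 a1 lam (S17.cone x (e N)) := S17.mu_mono e a0 a1 lam hi
          _ ≤ S17.nu e a0 a1 (S17.cone x (e N)) :=
              S17.mu_le_nu_self e a0 a1 lam (S17.isOpen_cone x (e N))
          _ ≤ ENNReal.ofReal (2 * ((2:ℝ) ^ N)⁻¹) := S17.nu_cone_le e a0 a1 hA x N
      exact le_of_eq (S17.glb_zero b key)
  · -- continuous
    intro x
    exact ⟨⟨∅, {x}, isOpen_empty, hsing x, (empty_union _).symm⟩,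
      S17.mu_small e a0 a1 lam hA hc (hsing x)⟩
  · -- second countable support
    refine S17.secondCountable_of_sub_C2 e a0 a1 _ ?_
    intro x hx
    by_contra hxC2
    refine hx ?_
    simp only [S17.C2, Set.mem_setOf_eq] at hxC2
    push_neg at hxC2
    obtain ⟨i0, h01⟩ := hxC2
    exact ⟨S17.cone x (e (e.symm i0 + 1)),
      ⟨S17.isOpen_cone _ _, S17.mu_cone_nonbinary e a0 a1 lam x i0 h01.1 h01.2⟩,
      S17.mem_cone_self _ _⟩

end
end

section
/- Let κ ≤ λ be infinite cardinals with κ regular, and let δ ≤ λ be a regular cardinal. Let S be the positively totally ordered monoid whose underlying set is the set of ordinals ≤ κ, ordered by the reverse of the ordinal order (so that κ is the least element), with monoid operation the ordinal minimum and neutral element κ. Then there exist a family 𝔐 of subsets of ᵏλ and a function μ : 𝔐 → S such that (ᵏλ, 𝔐, μ) is a continuous weak δ-measure space and supp(μ) = ᵏλ, i.e., μ(O) > 0 for every nonempty open set O. -/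
open Cardinal Set

noncomputable section

/-- `(X, M, μ)` is a weak `δ`-measure space (`delta` playing the role of `δ`):
`M` contains all open sets and is closed under unions of fewer than `delta` many sets,
and `μ` satisfies the axioms (M1)-(M5) for families indexed by ordinals `γ < delta`. -/
structure IsWeakMeasureSpaceLT (X : Type) [TopologicalSpace X] (delta : Cardinal)
    (S : Type*) [AddMonoid S] [LinearOrder S] (M : Set (Set X)) (μ : Set X → S) : Prop where
  open_mem : ∀ U : Set X, IsOpen U → U ∈ M
  sUnion_mem : ∀ 𝒜 : Set (Set X), 𝒜 ⊆ M → #↥𝒜 < delta → ⋃₀ 𝒜 ∈ M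
  measure_empty : μ ∅ = 0
  measure_univ_pos : 0 < μ Set.univ
  mono : ∀ A B : Set X, A ∈ M → B ∈ M → A ⊆ B → μ A ≤ μ B
  additive : ∀ (γ : Ordinal) (A : γ.ToType → Set X), γ < delta.ord →
    (∀ i, A i ∈ M) → Pairwise (Function.onFun Disjoint A) →
    IsLUB {s : S | ∃ F : Finset γ.ToType, s = finSum (fun i => μ (A i)) F} (μ (⋃ i, A i))
  point_reg : ∀ (x : X) (γ : Ordinal) (A : γ.ToType → Set X),
    {x} ∈ M → γ < delta.ord →
    (∀ i, IsOpen (A i) ∧ x ∈ A i) →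
    (∀ U : Set X, IsOpen U → x ∈ U → ∃ i, A i ⊆ U) →
    IsGLB (Set.range fun i => μ (A i)) (μ {x})

/-- The set of ordinals `≤ κ`, with the *reverse* order (so `κ` is the least element), with
monoid operation the ordinal minimum and neutral element `κ`. -/
def RevOrd (κ : Cardinal) : Type 1 := {o : Ordinal // o ≤ κ.ord}

instance (κ : Cardinal) : LinearOrder (RevOrd κ) :=
  LinearOrder.lift' (fun a : RevOrd κ => OrderDual.toDual a.1)
    (fun a b h => Subtype.ext (OrderDual.toDual.injective h))

instance (κ : Cardinal) : Zero (RevOrd κ) := ⟨⟨κ.ord, le_rfl⟩⟩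

instance (κ : Cardinal) : Add (RevOrd κ) :=
  ⟨fun a b => ⟨min a.1 b.1, le_trans (min_le_left _ _) a.2⟩⟩

instance (κ : Cardinal) : AddMonoid (RevOrd κ) where
  add_assoc a b c := Subtype.ext (min_assoc _ _ _)
  zero_add a := Subtype.ext (min_eq_right a.2)
  add_zero a := Subtype.ext (min_eq_left a.2)
  nsmul := nsmulRec
  nsmul_zero _ := rfl
  nsmul_succ _ _ := rfl

namespace St18

theorem RevOrd.le_iff {κ : Cardinal} {a b : RevOrd κ} : a ≤ b ↔ b.1 ≤ a.1 := Iff.rfl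
theorem RevOrd.lt_iff {κ : Cardinal} {a b : RevOrd κ} : a < b ↔ b.1 < a.1 := Iff.rfl

/-! ### Cones -/

def cone {ι A : Type} [LinearOrder ι] (x : GSeq ι A) (b : ι) : Set (GSeq ι A) :=
  {y : GSeq ι A | ∀ i, i < b → y i = x i}

theorem mem_cone_self {ι A : Type} [LinearOrder ι] (x : GSeq ι A) (b : ι) : x ∈ cone x b :=
  fun _ _ => rfl

theorem isOpen_cone {ι A : Type} [LinearOrder ι] (x : GSeq ι A) (b : ι) :
    IsOpen (cone x b) :=
  TopologicalSpace.isOpen_generateFrom_of_mem ⟨x, b, rfl⟩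

theorem exists_cone_subset {ι A : Type} [LinearOrder ι] [Nonempty ι] {O : Set (GSeq ι A)}
    (hO : IsOpen O) : ∀ x ∈ O, ∃ b : ι, cone x b ⊆ O := by
  have h : TopologicalSpace.GenerateOpen
      {C : Set (GSeq ι A) | ∃ (x : ι → A) (b : ι),
        C = {y : GSeq ι A | ∀ i, i < b → y i = x i}} O := hO
  clear hO
  induction h with
  | basic s hs =>
    rintro x hx
    obtain ⟨x', b, rfl⟩ := hs
    exact ⟨b, fun y hy i hib => (hy i hib).trans (hx i hib)⟩
  | univ =>
    rintro x -
    exact ⟨Classical.arbitrary ι, fun y _ => trivial⟩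
  | inter s t _ _ ihs iht =>
    rintro x hx
    obtain ⟨b1, h1⟩ := ihs x hx.1
    obtain ⟨b2, h2⟩ := iht x hx.2
    refine ⟨max b1 b2, fun y hy => ⟨h1 fun i hi => hy i (hi.trans_le (le_max_left _ _)),
      h2 fun i hi => hy i (hi.trans_le (le_max_right _ _))⟩⟩
  | sUnion S _ ih =>
    rintro x hx
    obtain ⟨s, hsS, hxs⟩ := hx
    obtain ⟨b, hb⟩ := ih s hsS x hxs
    exact ⟨b, hb.trans (subset_sUnion_of_mem hsS)⟩

/-! ### Lengths of coordinates -/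

def wo (o : Ordinal) : IsWellOrder o.ToType (· < ·) := isWellOrder_lt

def len {κ : Cardinal} (b : κ.ord.ToType) : Ordinal := @Ordinal.typein _ (· < ·) (wo _) b

theorem len_lt {κ : Cardinal} (b : κ.ord.ToType) : len b < κ.ord := by
  have := @Ordinal.typein_lt_type _ (· < ·) (wo _) b
  rwa [Ordinal.type_toType] at this

theorem exists_len_eq {κ : Cardinal} {o : Ordinal} (h : o < κ.ord) :
    ∃ b : κ.ord.ToType, len b = o := by
  have h2 : o < @Ordinal.type κ.ord.ToType (· < ·) (wo _) := by rwa [Ordinal.type_toType]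
  obtain ⟨b, hb⟩ := @Ordinal.typein_surj _ (· < ·) (wo _) _ h2
  exact ⟨b, hb⟩

theorem len_lt_len {κ : Cardinal} {a b : κ.ord.ToType} : len a < len b ↔ a < b :=
  @Ordinal.typein_lt_typein _ (· < ·) (wo _) _ _

/-! ### The smallness ideals and the rank `nu` -/

variable (κ lam δ : Cardinal)

abbrev Xt := GSeq κ.ord.ToType lam.ord.ToType

def smallAt (α : Ordinal) (S : Set (Xt κ lam)) : Prop :=
  ∃ T : Set (Set (Xt κ lam)), #T < δ ∧
    (∀ C ∈ T, ∃ x b, α < len b ∧ C = cone x b) ∧ S ⊆ ⋃₀ T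

variable {κ lam δ}

theorem smallAt_mono {α : Ordinal} {S S' : Set (Xt κ lam)} (hSS : S ⊆ S')
    (h : smallAt κ lam δ α S') : smallAt κ lam δ α S := by
  obtain ⟨T, h1, h2, h3⟩ := h
  exact ⟨T, h1, h2, hSS.trans h3⟩

theorem smallAt_empty (hδ : δ.IsRegular) (α : Ordinal) :
    smallAt κ lam δ α (∅ : Set (Xt κ lam)) := by
  refine ⟨∅, ?_, by simp, by simp⟩
  rw [mk_emptyCollection]
  exact aleph0_pos.trans_le hδ.aleph0_le

theorem smallAt_of_subset_cone (hδ : δ.IsRegular) {α : Ordinal} {S : Set (Xt κ lam)}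
    {x : Xt κ lam} {b : κ.ord.ToType} (hS : S ⊆ cone x b) (hα : α < len b) :
    smallAt κ lam δ α S := by
  refine ⟨{cone x b}, ?_, ?_, by simpa using hS⟩
  · rw [mk_singleton]
    exact one_lt_aleph0.trans_le hδ.aleph0_le
  · rintro C hC
    rw [mem_singleton_iff] at hC
    exact ⟨x, b, hα, hC⟩

theorem cone_not_smallAt (hδ : δ.IsRegular) (hδlam : δ ≤ lam)
    (x : Xt κ lam) (b : κ.ord.ToType) : ¬ smallAt κ lam δ (len b) (cone x b) := by
  rintro ⟨T, hTcard, hTcones, hTcov⟩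
  choose xf bf hlen hEq using hTcones
  have hAt : #(lam.ord.ToType) = lam := by rw [mk_toType, card_ord]
  set g : T → lam.ord.ToType := fun C => xf C.1 C.2 b with hg
  have hne : range g ≠ Set.univ := by
    intro h
    have h1 : #(range g) ≤ #T := mk_range_le
    rw [h, mk_univ, hAt] at h1
    exact absurd (h1.trans_lt (hTcard.trans_le hδlam)) (lt_irrefl _)
  obtain ⟨e, he⟩ := (ne_univ_iff_exists_notMem _).1 hne
  set y : Xt κ lam := fun i => if i < b then x i else e with hy
  have hyc : y ∈ cone x b := fun i hib => by simp only [hy, if_pos hib]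
  obtain ⟨C, hCT, hyC⟩ := hTcov hyc
  rw [hEq C hCT] at hyC
  have hb' : b < bf C hCT := len_lt_len.1 (hlen C hCT)
  have h1 : y b = xf C hCT b := hyC b hb'
  have h2 : y b = e := by simp only [hy, if_neg (lt_irrefl b)]
  exact he ⟨⟨C, hCT⟩, show xf C hCT b = e from h1.symm.trans h2⟩

theorem smallAt_iUnion (hδ : δ.IsRegular) {ι' : Type} {α : Ordinal}
    {A : ι' → Set (Xt κ lam)} (hι : #ι' < δ)
    (h : ∀ i, smallAt κ lam δ α (A i)) : smallAt κ lam δ α (⋃ i, A i) := by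
  choose T hTc hTcone hTcov using h
  refine ⟨⋃ i, T i, ?_, ?_, ?_⟩
  · exact mk_iUnion_le_sum_mk.trans_lt (sum_lt_of_isRegular hδ hι hTc)
  · rintro C hC
    obtain ⟨i, hCi⟩ := mem_iUnion.1 hC
    exact hTcone i C hCi
  · exact iUnion_subset fun i => (hTcov i).trans (sUnion_mono (subset_iUnion T i))

variable (κ lam δ)

def nuSet (S : Set (Xt κ lam)) : Set Ordinal :=
  {α | α = κ.ord ∨ (α < κ.ord ∧ ¬ smallAt κ lam δ α S)}

def nu (S : Set (Xt κ lam)) : Ordinal := sInf (nuSet κ lam δ S)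

variable {κ lam δ}

theorem nuSet_nonempty (S : Set (Xt κ lam)) : (nuSet κ lam δ S).Nonempty :=
  ⟨κ.ord, Or.inl rfl⟩

theorem nu_le_top (S : Set (Xt κ lam)) : nu κ lam δ S ≤ κ.ord :=
  csInf_le' (Or.inl rfl)

theorem nu_mono {S S' : Set (Xt κ lam)} (h : S ⊆ S') : nu κ lam δ S' ≤ nu κ lam δ S := by
  refine csInf_le_csInf (OrderBot.bddBelow _) (nuSet_nonempty S) ?_
  rintro α (rfl | ⟨h1, h2⟩)
  · exact Or.inl rfl
  · exact Or.inr ⟨h1, fun hs => h2 (smallAt_mono h hs)⟩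

theorem nu_spec (S : Set (Xt κ lam)) :
    nu κ lam δ S = κ.ord ∨ (nu κ lam δ S < κ.ord ∧ ¬ smallAt κ lam δ (nu κ lam δ S) S) :=
  csInf_mem (nuSet_nonempty S)

theorem nu_eq_top_of_small {S : Set (Xt κ lam)}
    (h : ∀ α < κ.ord, smallAt κ lam δ α S) : nu κ lam δ S = κ.ord := by
  rcases nu_spec (δ := δ) S with h' | ⟨h1, h2⟩
  · exact h'
  · exact absurd (h _ h1) h2

theorem nu_le_len {O : Set (Xt κ lam)} (hδ : δ.IsRegular) (hδlam : δ ≤ lam)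
    {x : Xt κ lam} {b : κ.ord.ToType} (h : cone x b ⊆ O) : nu κ lam δ O ≤ len b :=
  csInf_le' (Or.inr ⟨len_lt b, fun hs => cone_not_smallAt hδ hδlam x b (smallAt_mono h hs)⟩)

theorem nu_singleton (hκ : ℵ₀ ≤ κ) (hδ : δ.IsRegular) (x : Xt κ lam) :
    nu κ lam δ {x} = κ.ord := by
  refine nu_eq_top_of_small fun α hα => ?_
  obtain ⟨b, hb⟩ := exists_len_eq ((isSuccLimit_ord hκ).succ_lt hα)
  refine smallAt_of_subset_cone hδ (singleton_subset_iff.2 (mem_cone_self x b)) ?_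
  rw [hb]
  exact Order.lt_succ α

theorem nu_empty (hδ : δ.IsRegular) : nu κ lam δ (∅ : Set (Xt κ lam)) = κ.ord :=
  nu_eq_top_of_small fun α _ => smallAt_empty hδ α

/-! ### finSum lemmas -/

theorem le_listSum {κ : Cardinal} {c : Ordinal} (hc : c ≤ κ.ord) (l : List (RevOrd κ))
    (h : ∀ a ∈ l, c ≤ a.1) : c ≤ l.sum.1 := by
  induction l with
  | nil => exact hc
  | cons a l ih =>
    rw [List.sum_cons]
    exact le_min (h a (List.mem_cons_self)) (ih fun b hb => h b (List.mem_cons_of_mem a hb))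

theorem finSum_singleton {ι' : Type*} [LinearOrder ι'] {κ : Cardinal} (f : ι' → RevOrd κ)
    (i : ι') : finSum f ({i} : Finset ι') = f i := by
  unfold finSum
  rw [Finset.sort_singleton]
  simp

end St18

open St18 in
/-- for infinite cardinals `κ ≤ λ` with `κ` regular and any regular `δ ≤ λ`,
there is a continuous weak `δ`-measure space on `ᵏλ`, with values in the reverse-ordered
monoid of ordinals `≤ κ`, whose support is all of `ᵏλ` (every nonempty open set has positive
measure). -/
theorem statement_18 (κ lam δ : Cardinal) (hκ : κ.IsRegular) (hlam : ℵ₀ ≤ lam)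
    (hκlam : κ ≤ lam) (hδ : δ.IsRegular) (hδlam : δ ≤ lam) :
    ∃ (M : Set (Set (GSeq κ.ord.ToType lam.ord.ToType)))
      (μ : Set (GSeq κ.ord.ToType lam.ord.ToType) → RevOrd κ),
      IsWeakMeasureSpaceLT (GSeq κ.ord.ToType lam.ord.ToType) δ (RevOrd κ) M μ ∧
      MeasureContinuous M μ ∧
      ∀ O : Set (GSeq κ.ord.ToType lam.ord.ToType), IsOpen O → O.Nonempty → 0 < μ O := by
  classical
  have hι : Nonempty κ.ord.ToType := by
    rw [Ordinal.toType_nonempty_iff_ne_zero]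
    intro h
    have h2 : κ = 0 := by
      have := Ordinal.card_eq_zero.2 h
      rwa [card_ord] at this
    rw [h2] at hκ
    exact (aleph0_pos.trans_le hκ.aleph0_le).ne' rfl
  have hAt : Nonempty lam.ord.ToType := by
    rw [Ordinal.toType_nonempty_iff_ne_zero]
    intro h
    have h2 : lam = 0 := by
      have := Ordinal.card_eq_zero.2 h
      rwa [card_ord] at this
    rw [h2] at hlam
    exact (aleph0_pos.trans_le hlam).ne' rfl
  set X := GSeq κ.ord.ToType lam.ord.ToType with hX
  have hXne : Nonempty X := ⟨fun _ => Classical.arbitrary _⟩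
  set μ : Set X → RevOrd κ := fun S => ⟨nu κ lam δ S, nu_le_top S⟩ with hμ
  -- support
  have hsupp : ∀ O : Set X, IsOpen O → O.Nonempty → 0 < μ O := by
    rintro O hO ⟨x, hx⟩
    obtain ⟨b, hb⟩ := exists_cone_subset hO x hx
    rw [RevOrd.lt_iff]
    exact (nu_le_len hδ hδlam hb).trans_lt (len_lt b)
  refine ⟨Set.univ, μ, ⟨fun _ _ => trivial, fun _ _ _ => trivial, ?_, ?_, ?_, ?_, ?_⟩, ?_, hsupp⟩
  · -- measure_empty
    exact Subtype.ext (nu_empty hδ)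
  · -- measure_univ_pos
    exact hsupp univ isOpen_univ univ_nonempty
  · -- mono
    rintro A B - - hAB
    rw [RevOrd.le_iff]
    exact nu_mono hAB
  · -- additive
    rintro γ A hγ - -
    constructor
    · rintro s ⟨F, rfl⟩
      rw [RevOrd.le_iff]
      refine le_listSum (nu_le_top _) _ ?_
      rintro a ha
      obtain ⟨i, -, rfl⟩ := List.mem_map.1 ha
      exact nu_mono (subset_iUnion A i)
    · rintro c hc
      rw [RevOrd.le_iff]
      rcases nu_spec (δ := δ) (⋃ i, A i) with h' | ⟨h1, h2⟩
      · rw [hμ]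
        simp only [h']
        exact c.2
      · have hcard : #γ.ToType < δ := by
          rw [mk_toType]
          exact Cardinal.lt_ord.1 hγ
        have : ∃ i, ¬ smallAt κ lam δ (nu κ lam δ (⋃ i, A i)) (A i) := by
          by_contra hall
          push_neg at hall
          exact h2 (smallAt_iUnion hδ hcard hall)
        obtain ⟨i, hi⟩ := this
        have h3 : nu κ lam δ (A i) ≤ nu κ lam δ (⋃ i, A i) := csInf_le' (Or.inr ⟨h1, hi⟩)
        have h4 : μ (A i) ≤ c := hc ⟨{i}, (finSum_singleton (fun j => μ (A j)) i).symm⟩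
        exact (RevOrd.le_iff.1 h4).trans h3
  · -- point_reg
    rintro x γ A - hγ hA hbasis
    have hxval : μ {x} = ⟨κ.ord, le_rfl⟩ := Subtype.ext (nu_singleton hκ.aleph0_le hδ x)
    constructor
    · rintro s ⟨i, rfl⟩
      rw [RevOrd.le_iff, hxval]
      exact (μ (A i)).2
    · rintro c hc
      rw [RevOrd.le_iff, hxval]
      by_contra hlt
      have hc1 : c.1 < κ.ord := lt_of_not_ge hlt
      obtain ⟨b, hb⟩ := exists_len_eq ((isSuccLimit_ord hκ.aleph0_le).succ_lt hc1)
      obtain ⟨i, hisub⟩ := hbasis (cone x b) (isOpen_cone x b) (mem_cone_self x b)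
      have hlb : c ≤ μ (A i) := hc ⟨i, rfl⟩
      rw [RevOrd.le_iff] at hlb
      have hge : len b ≤ nu κ lam δ (A i) := by
        refine le_csInf (nuSet_nonempty _) ?_
        rintro a (rfl | ⟨ha1, ha2⟩)
        · exact (len_lt b).le
        · by_contra hab
          exact ha2 (smallAt_of_subset_cone hδ hisub (lt_of_not_ge hab))
      rw [hb] at hge
      exact absurd (hlb.trans_lt (Order.lt_succ c.1)) (not_lt.2 hge)
  · -- continuity
    intro x
    exact ⟨trivial, Subtype.ext (nu_singleton hκ.aleph0_le hδ x)⟩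


end
end
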